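/- arXiv:1105.5903 — 7 statements merged into one kernel-verified Lean document; each statement's English description precedes it below -/
import Mathlib

section
/- Fix m* ∈ F_2^k of Hamming weight u and c* ∈ F_2^n of Hamming weight v. The number of graphs G in the ensemble G_{k,n} (injective labelings of n edges into unordered pairs of k vertices) whose incidence matrix satisfies m* M(G) = c* equals v! (n-v)! C(u(k-u), v) C(C(k,2) - u(k-u), n-v). -/
open scoped Classical

noncomputable section

/-- Incidence matrix over F_2 of an edge labeling `e`. -/
def inc {k n : ℕ} (e : Fin n → Sym2 (Fin k)) : Matrix (Fin k) (Fin n) (ZMod 2) :=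
  Matrix.of fun i j => if i ∈ e j then 1 else 0

/-- Hamming weight of a binary vector. -/
def wt {d : ℕ} (x : Fin d → ZMod 2) : ℕ := (Finset.univ.filter fun i => x i ≠ 0).card

/-- `e` is a valid member of the ensemble `G_{k,n}`: an injective labeling of
edges by unordered pairs of distinct vertices. -/
def IsGraph {k n : ℕ} (e : Fin n → Sym2 (Fin k)) : Prop :=
  Function.Injective e ∧ ∀ j, ¬ (e j).IsDiag

/-- The simple graph determined by the edge labeling. -/
def toGraph {k n : ℕ} (e : Fin n → Sym2 (Fin k)) : SimpleGraph (Fin k) :=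
  SimpleGraph.fromEdgeSet (Set.range e)

/-- The ensemble `G_{k,n}`. -/
def Ens (k n : ℕ) := {e : Fin n → Sym2 (Fin k) // IsGraph e}

instance (k n : ℕ) : Fintype (Ens k n) := Subtype.fintype _

/-- The unordered pair `s` crosses the cut `(V1, V1ᶜ)`. -/
def crosses {k : ℕ} (V1 : Finset (Fin k)) (s : Sym2 (Fin k)) : Prop :=
  ∃ a b, s = s(a, b) ∧ a ∈ V1 ∧ b ∉ V1

/-- `E'` is a cut-set of the graph given by `e`. -/
def IsCutSet {k n : ℕ} (e : Fin n → Sym2 (Fin k)) (E' : Finset (Fin n)) : Prop :=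
  ∃ V1 : Finset (Fin k), E' = Finset.univ.filter fun j => crosses V1 (e j)

/-- Cut-set weight distribution `B_v(G)`. -/
def Bv {k n : ℕ} (e : Fin n → Sym2 (Fin k)) (v : ℕ) : ℕ :=
  Nat.card {E' : Finset (Fin n) // IsCutSet e E' ∧ E'.card = v}

/-- Input–output weight distribution `A_{u,v}(G)`. -/
def Auv {k n : ℕ} (e : Fin n → Sym2 (Fin k)) (u v : ℕ) : ℕ :=
  Nat.card {p : (Fin k → ZMod 2) × (Fin n → ZMod 2) //
    wt p.1 = u ∧ wt p.2 = v ∧ Matrix.vecMul p.1 (inc e) = p.2}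

/-- Survivor subgraph after the edges in `E'` fail. -/
def survivor {k n : ℕ} (e : Fin n → Sym2 (Fin k)) (E' : Finset (Fin n)) : SimpleGraph (Fin k) :=
  SimpleGraph.fromEdgeSet (e '' {j | j ∉ E'})

/-- Network failure probability of a connected graph. -/
def Pf {k n : ℕ} (e : Fin n → Sym2 (Fin k)) (ε : ℝ) : ℝ :=
  ∑ E' : Finset (Fin n),
    (if ¬ (survivor e E').Connected then ε ^ E'.card * (1 - ε) ^ (n - E'.card) else 0)

/-- Network failure probability, equal to 1 for unconnected graphs. -/
def PfFull {k n : ℕ} (e : Fin n → Sym2 (Fin k)) (ε : ℝ) : ℝ :=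
  if (toGraph e).Connected then Pf e ε else 1

/-- Size `T(G)` of the left kernel of the incidence matrix. -/
def TG {k n : ℕ} (e : Fin n → Sym2 (Fin k)) : ℕ :=
  Nat.card {m : Fin k → ZMod 2 // Matrix.vecMul m (inc e) = 0}

/-- Probability that a uniformly random graph of the ensemble is unconnected. -/
def PU (k n : ℕ) : ℝ :=
  (Nat.card {G : Ens k n // ¬ (toGraph G.1).Connected} : ℝ) / Nat.card (Ens k n)
namespace Stmt5Aux

def phi {k : ℕ} (m : Fin k → ZMod 2) : Sym2 (Fin k) → ZMod 2 :=
  Sym2.lift ⟨fun a b => m a + m b, fun a b => add_comm _ _⟩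

lemma zmod2_cases (a : ZMod 2) : a = 0 ∨ a = 1 := by
  revert a; decide

lemma vecMul_inc_apply {k n : ℕ} (m : Fin k → ZMod 2) (e : Fin n → Sym2 (Fin k)) (j : Fin n)
    (h : ¬ (e j).IsDiag) : Matrix.vecMul m (inc e) j = phi m (e j) := by
  have key : ∀ s : Sym2 (Fin k), ¬ s.IsDiag →
      (∑ i, m i * (if i ∈ s then (1 : ZMod 2) else 0)) = phi m s := by
    intro s
    induction s using Sym2.inductionOn with
    | hf a b =>
      intro hs
      have hab : a ≠ b := by simpa [Sym2.isDiag_iff_proj_eq] using hs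
      have h1 : ∀ i, m i * (if i ∈ s(a, b) then (1 : ZMod 2) else 0)
          = if i ∈ ({a, b} : Finset (Fin k)) then m i else 0 := by
        intro i
        by_cases hi : i = a ∨ i = b
        · rw [if_pos (Sym2.mem_iff.mpr hi), if_pos (by simpa using hi), mul_one]
        · rw [if_neg (fun hh => hi (Sym2.mem_iff.mp hh)),
            if_neg (by simpa using hi), mul_zero]
      rw [Finset.sum_congr rfl fun i _ => h1 i, Finset.sum_ite_mem, Finset.univ_inter,
        Finset.sum_pair hab]
      rfl
  rw [← key (e j) h]
  simp [Matrix.vecMul, dotProduct, inc]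

def crossEquiv {k : ℕ} (m : Fin k → ZMod 2) :
    ({i : Fin k // m i ≠ 0} × {i : Fin k // m i = 0}) ≃
      {s : Sym2 (Fin k) // ¬ s.IsDiag ∧ phi m s = 1} := by
  refine Equiv.ofBijective (fun p => ⟨s(p.1.1, p.2.1), ?_, ?_⟩) ⟨?_, ?_⟩
  · intro hd
    rw [Sym2.isDiag_iff_proj_eq] at hd
    have hd' : (p.1 : Fin k) = p.2.1 := hd
    exact p.1.2 (hd' ▸ p.2.2)
  · rcases zmod2_cases (m p.1.1) with h | h
    · exact absurd h p.1.2
    · show m p.1.1 + m p.2.1 = 1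
      rw [h, p.2.2, add_zero]
  · rintro ⟨⟨a, ha⟩, ⟨b, hb⟩⟩ ⟨⟨a', ha'⟩, ⟨b', hb'⟩⟩ hpq
    have := Subtype.ext_iff.mp hpq
    simp only [Sym2.eq_iff] at this
    rcases this with ⟨rfl, rfl⟩ | ⟨rfl, rfl⟩
    · rfl
    · exact absurd hb' ha
  · rintro ⟨s, hs⟩
    revert hs
    induction s using Sym2.inductionOn with
    | hf x y =>
      rintro ⟨hnd, h1⟩
      have h1' : m x + m y = 1 := h1
      rcases zmod2_cases (m x) with hx | hx <;> rcases zmod2_cases (m y) with hy | hy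
      · rw [hx, hy] at h1'; exact absurd h1' (by decide)
      · exact ⟨⟨⟨y, by rw [hy]; decide⟩, ⟨x, hx⟩⟩, Subtype.ext (Sym2.eq_swap)⟩
      · exact ⟨⟨⟨x, by rw [hx]; decide⟩, ⟨y, hy⟩⟩, rfl⟩
      · rw [hx, hy] at h1'; exact absurd h1' (by decide)

def mainEquiv {k n : ℕ} (m : Fin k → ZMod 2) (c : Fin n → ZMod 2) :
    {e : Fin n → Sym2 (Fin k) // IsGraph e ∧ Matrix.vecMul m (inc e) = c} ≃
      (({j : Fin n // c j ≠ 0} ↪ {s : Sym2 (Fin k) // ¬ s.IsDiag ∧ phi m s = 1}) ×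
       ({j : Fin n // c j = 0} ↪ {s : Sym2 (Fin k) // ¬ s.IsDiag ∧ phi m s = 0})) where
  toFun := fun ⟨e, ⟨einj, end'⟩, hc⟩ =>
    (⟨fun j => ⟨e j.1, end' j.1, by
        have h := congrFun hc j.1
        rw [vecMul_inc_apply m e j.1 (end' j.1)] at h
        rcases zmod2_cases (c j.1) with h0 | h0
        · exact absurd h0 j.2
        · rw [h, h0]⟩,
      fun a b hab => Subtype.ext (einj (congrArg Subtype.val hab))⟩,
     ⟨fun j => ⟨e j.1, end' j.1, by
        have h := congrFun hc j.1
        rw [vecMul_inc_apply m e j.1 (end' j.1)] at h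
        rw [h, j.2]⟩,
      fun a b hab => Subtype.ext (einj (congrArg Subtype.val hab))⟩)
  invFun := fun fg =>
    ⟨fun j => if h : c j ≠ 0 then (fg.1 ⟨j, h⟩).1 else (fg.2 ⟨j, not_not.mp h⟩).1, by
      constructor
      constructor
      · intro j1 j2 heq
        dsimp at heq
        by_cases h1 : c j1 ≠ 0 <;> by_cases h2 : c j2 ≠ 0
        · rw [dif_pos h1, dif_pos h2] at heq
          have := fg.1.injective (Subtype.ext heq)
          exact congrArg Subtype.val this
        · rw [dif_pos h1, dif_neg h2] at heq
          have e1 := (fg.1 ⟨j1, h1⟩).2.2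
          have e2 := (fg.2 ⟨j2, not_not.mp h2⟩).2.2
          rw [heq] at e1
          rw [e1] at e2
          exact absurd e2 (by decide)
        · rw [dif_neg h1, dif_pos h2] at heq
          have e1 := (fg.1 ⟨j2, h2⟩).2.2
          have e2 := (fg.2 ⟨j1, not_not.mp h1⟩).2.2
          rw [← heq] at e1
          rw [e1] at e2
          exact absurd e2 (by decide)
        · rw [dif_neg h1, dif_neg h2] at heq
          have := fg.2.injective (Subtype.ext heq)
          exact congrArg Subtype.val this
      · intro j
        dsimp
        by_cases h : c j ≠ 0
        · rw [dif_pos h]; exact (fg.1 ⟨j, h⟩).2.1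
        · rw [dif_neg h]; exact (fg.2 ⟨j, not_not.mp h⟩).2.1
      · funext j
        by_cases h : c j ≠ 0
        · have hnd : ¬ ((fun j => if h : c j ≠ 0 then (fg.1 ⟨j, h⟩).1
              else (fg.2 ⟨j, not_not.mp h⟩).1) j).IsDiag := by
            dsimp; rw [dif_pos h]; exact (fg.1 ⟨j, h⟩).2.1
          rw [vecMul_inc_apply m _ j hnd]
          dsimp
          rw [dif_pos h, (fg.1 ⟨j, h⟩).2.2]
          rcases zmod2_cases (c j) with h0 | h0
          · exact absurd h0 h
          · rw [h0]
        · have hc0 : c j = 0 := not_not.mp h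
          have hnd : ¬ ((fun j => if h : c j ≠ 0 then (fg.1 ⟨j, h⟩).1
              else (fg.2 ⟨j, not_not.mp h⟩).1) j).IsDiag := by
            dsimp; rw [dif_neg h]; exact (fg.2 ⟨j, hc0⟩).2.1
          rw [vecMul_inc_apply m _ j hnd]
          dsimp
          rw [dif_neg h, (fg.2 ⟨j, not_not.mp h⟩).2.2, hc0]⟩
  left_inv := by
    rintro ⟨e, ⟨einj, end'⟩, hc⟩
    apply Subtype.ext
    funext j
    dsimp only
    by_cases h : c j ≠ 0
    · rw [dif_pos h]; rfl
    · rw [dif_neg h]; rfl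
  right_inv := by
    rintro ⟨f, g⟩
    refine Prod.ext ?_ ?_
    · apply Function.Embedding.ext
      intro j
      apply Subtype.ext
      simp only [Function.Embedding.coeFn_mk, dif_pos j.2, Subtype.coe_eta]
    · apply Function.Embedding.ext
      intro j
      apply Subtype.ext
      simp only [Function.Embedding.coeFn_mk, dif_neg (not_not.mpr j.2), Subtype.coe_eta]

lemma card_cross {k : ℕ} (m : Fin k → ZMod 2) :
    Fintype.card {s : Sym2 (Fin k) // ¬ s.IsDiag ∧ phi m s = 1} = wt m * (k - wt m) := by
  rw [← Fintype.card_congr (crossEquiv m), Fintype.card_prod]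
  congr 1
  · rw [Fintype.card_subtype]; rfl
  · have h1 : Fintype.card {i : Fin k // m i = 0}
        = Fintype.card {i : Fin k // ¬ (m i ≠ 0)} :=
      Fintype.card_congr (Equiv.subtypeEquivRight (by intro i; simp))
    rw [h1, Fintype.card_subtype_compl, Fintype.card_fin, Fintype.card_subtype]
    rfl

lemma card_noncross {k : ℕ} (m : Fin k → ZMod 2) :
    Fintype.card {s : Sym2 (Fin k) // ¬ s.IsDiag ∧ phi m s = 0}
      = k.choose 2 - wt m * (k - wt m) := by
  have hsplit : Fintype.card {s : Sym2 (Fin k) // ¬ s.IsDiag ∧ phi m s = 1}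
      + Fintype.card {s : Sym2 (Fin k) // ¬ s.IsDiag ∧ phi m s = 0}
      = Fintype.card {s : Sym2 (Fin k) // ¬ s.IsDiag} := by
    rw [Fintype.card_subtype, Fintype.card_subtype, Fintype.card_subtype]
    have : ∀ s : Sym2 (Fin k), (¬ s.IsDiag ∧ phi m s = 0) ↔ (¬ s.IsDiag ∧ ¬ (phi m s = 1)) := by
      intro s
      rcases zmod2_cases (phi m s) with h | h <;> rw [h] <;> simp <;> decide
    rw [Finset.filter_congr (fun s _ => this s)]
    have := Finset.card_filter_add_card_filter_not
      (s := Finset.univ.filter fun s : Sym2 (Fin k) => ¬ s.IsDiag)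
      (p := fun s => phi m s = 1)
    rw [Finset.filter_filter, Finset.filter_filter] at this
    convert this using 3 <;> ext s <;> tauto
  have hnd : Fintype.card {s : Sym2 (Fin k) // ¬ s.IsDiag} = k.choose 2 := by
    rw [Sym2.card_subtype_not_diag, Fintype.card_fin]
  rw [card_cross] at hsplit
  omega

end Stmt5Aux

theorem stmt5 (k n u v : ℕ) (m : Fin k → ZMod 2) (c : Fin n → ZMod 2)
    (hu : wt m = u) (hv : wt c = v) :
    Nat.card {e : Fin n → Sym2 (Fin k) // IsGraph e ∧ Matrix.vecMul m (inc e) = c}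
      = v.factorial * (n - v).factorial * (u * (k - u)).choose v
          * (k.choose 2 - u * (k - u)).choose (n - v) := by
  classical
  subst hu hv
  rw [Nat.card_eq_fintype_card, Fintype.card_congr (Stmt5Aux.mainEquiv m c),
    Fintype.card_prod, Fintype.card_embedding_eq, Fintype.card_embedding_eq,
    Stmt5Aux.card_cross, Stmt5Aux.card_noncross]
  have h1 : Fintype.card {j : Fin n // c j ≠ 0} = wt c := by
    rw [Fintype.card_subtype]; rfl
  have h2 : Fintype.card {j : Fin n // c j = 0} = n - wt c := by
    have : Fintype.card {j : Fin n // c j = 0}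
        = Fintype.card {j : Fin n // ¬ (c j ≠ 0)} :=
      Fintype.card_congr (Equiv.subtypeEquivRight (by intro i; simp))
    rw [this, Fintype.card_subtype_compl, Fintype.card_fin, Fintype.card_subtype]
    rfl
  rw [h1, h2, Nat.descFactorial_eq_factorial_mul_choose,
    Nat.descFactorial_eq_factorial_mul_choose]
  ring
end
end

section
/- Under the uniform distribution on the ensemble G_{k,n}, the expectation of A_{u,v}(G) equals C(k,u) C(u(k-u), v) C(C(k,2) - u(k-u), n-v) / C(C(k,2), n). -/
open scoped Classical

noncomputable section

set_option linter.unusedSectionVars false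
set_option linter.unusedVariables false
set_option maxHeartbeats 1000000

open Finset

section CountSplit

variable {n v : ℕ} {β : Type*} [Fintype β] {p q : β → Prop}

private abbrev SplitIdx (n v : ℕ) (β : Type*) (p q : β → Prop) :=
  Σ T : {T : Finset (Fin n) // T.card = v},
    ((T.1 : Finset (Fin n)) ↪ {b // p b ∧ q b}) × ((T.1ᶜ : Finset (Fin n)) ↪ {b // p b ∧ ¬ q b})

private def splitFun (σ : SplitIdx n v β p q) : Fin n → β :=
  fun j => if hj : j ∈ σ.1.1 then (σ.2.1 ⟨j, hj⟩).1 else (σ.2.2 ⟨j, by simpa using hj⟩).1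

private lemma splitFun_inj (σ : SplitIdx n v β p q) : Function.Injective (splitFun σ) := by
  obtain ⟨⟨T, hT⟩, g, h⟩ := σ
  intro a b hab
  unfold splitFun at hab
  by_cases ha : a ∈ T <;> by_cases hb : b ∈ T <;> simp only [dif_pos, dif_neg, ha, hb] at hab
  · exact Subtype.ext_iff.mp (g.injective (Subtype.ext hab))
  · exact absurd (hab ▸ (g ⟨a, ha⟩).2.2) (h ⟨b, by simpa using hb⟩).2.2
  · exact absurd (hab.symm ▸ (g ⟨b, hb⟩).2.2) (h ⟨a, by simpa using ha⟩).2.2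
  · exact Subtype.ext_iff.mp (h.injective (Subtype.ext hab))

private lemma splitFun_p (σ : SplitIdx n v β p q) (j : Fin n) : p (splitFun σ j) := by
  obtain ⟨⟨T, hT⟩, g, h⟩ := σ
  unfold splitFun
  by_cases hj : j ∈ T <;> simp only [dif_pos, dif_neg, hj]
  · exact (g ⟨j, hj⟩).2.1
  · exact (h ⟨j, by simpa using hj⟩).2.1

private lemma splitFun_filter (σ : SplitIdx n v β p q) :
    (univ.filter fun j => q (splitFun σ j)) = σ.1.1 := by
  obtain ⟨⟨T, hT⟩, g, h⟩ := σ
  ext j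
  unfold splitFun
  by_cases hj : j ∈ T <;> simp only [mem_filter, mem_univ, true_and, dif_pos, dif_neg, hj]
  · simpa using (g ⟨j, hj⟩).2.2
  · simpa [hj] using (h ⟨j, by simpa using hj⟩).2.2

private def splitMap (σ : SplitIdx n v β p q) :
    {f : Fin n → β //
        (Function.Injective f ∧ ∀ j, p (f j)) ∧ (univ.filter fun j => q (f j)).card = v} :=
  ⟨splitFun σ, ⟨splitFun_inj σ, splitFun_p σ⟩, by rw [splitFun_filter]; exact σ.1.2⟩

private lemma splitMap_bij :
    Function.Bijective (splitMap (n := n) (v := v) (β := β) (p := p) (q := q)) := by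
  constructor
  · rintro ⟨⟨T1, hT1⟩, g1, h1⟩ ⟨⟨T2, hT2⟩, g2, h2⟩ heq
    have hf : splitFun ⟨⟨T1, hT1⟩, g1, h1⟩ = splitFun ⟨⟨T2, hT2⟩, g2, h2⟩ :=
      Subtype.ext_iff.mp heq
    obtain rfl : T1 = T2 := by
      have := splitFun_filter ⟨⟨T1, hT1⟩, g1, h1⟩
      rw [hf, splitFun_filter ⟨⟨T2, hT2⟩, g2, h2⟩] at this
      exact this.symm
    have hg : g1 = g2 := by
      ext ⟨j, hj⟩
      have := congrFun hf j
      unfold splitFun at this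
      rw [dif_pos hj, dif_pos hj] at this
      exact this
    have hh : h1 = h2 := by
      ext ⟨j, hj⟩
      have hj' : ¬ j ∈ T1 := by simpa using hj
      have := congrFun hf j
      unfold splitFun at this
      rw [dif_neg hj', dif_neg hj'] at this
      exact this
    subst hg; subst hh; rfl
  · rintro ⟨f, ⟨finj, fp⟩, hcard⟩
    refine ⟨⟨⟨univ.filter fun j => q (f j), hcard⟩,
      ⟨fun x => ⟨f x.1, fp x.1, (mem_filter.mp x.2).2⟩,
        fun a b hab => Subtype.ext (finj (Subtype.ext_iff.mp hab))⟩,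
      ⟨fun x => ⟨f x.1, fp x.1, by simpa using x.2⟩,
        fun a b hab => Subtype.ext (finj (Subtype.ext_iff.mp hab))⟩⟩, ?_⟩
    · apply Subtype.ext
      funext j
      unfold splitMap splitFun
      by_cases hj : j ∈ univ.filter fun j => q (f j) <;>
        simp only [dif_pos, dif_neg, hj] <;> rfl

/-- Generic exact count: injective functions into `β` all of whose values satisfy `p`,
with exactly `v` values satisfying `q`. -/
private lemma count_split (p q : β → Prop) :
    Nat.card {f : Fin n → β //
        (Function.Injective f ∧ ∀ j, p (f j)) ∧ (univ.filter fun j => q (f j)).card = v}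
      = n.choose v * (Nat.card {b // p b ∧ q b}).descFactorial v
          * (Nat.card {b // p b ∧ ¬ q b}).descFactorial (n - v) := by
  classical
  simp only [Nat.card_eq_fintype_card]
  rw [← Fintype.card_of_bijective (splitMap_bij (n := n) (v := v) (p := p) (q := q)),
    Fintype.card_sigma]
  have : ∀ T : {T : Finset (Fin n) // T.card = v},
      Fintype.card (((T.1 : Finset (Fin n)) ↪ {b // p b ∧ q b})
        × ((T.1ᶜ : Finset (Fin n)) ↪ {b // p b ∧ ¬ q b}))
      = (Fintype.card {b // p b ∧ q b}).descFactorial v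
          * (Fintype.card {b // p b ∧ ¬ q b}).descFactorial (n - v) := by
    intro T
    rw [Fintype.card_prod, Fintype.card_embedding_eq, Fintype.card_embedding_eq,
      Fintype.card_coe, Fintype.card_coe, card_compl, T.2, Fintype.card_fin]
  rw [Finset.sum_congr rfl fun T _ => this T, Finset.sum_const, Finset.card_univ,
    Fintype.card_finset_len, Fintype.card_fin, smul_eq_mul, mul_assoc]

end CountSplit

-- `qm m s ↔` the pair `s` crosses the support of `m`.
def qm {k : ℕ} (m : Fin k → ZMod 2) (s : Sym2 (Fin k)) : Prop :=
  Sym2.lift ⟨fun x y => m x + m y, fun x y => add_comm _ _⟩ s ≠ 0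

lemma vecMul_inc {k n : ℕ} (m : Fin k → ZMod 2) (e : Fin n → Sym2 (Fin k))
    (hnd : ∀ j, ¬ (e j).IsDiag) (j : Fin n) :
    Matrix.vecMul m (inc e) j
      = Sym2.lift ⟨fun x y => m x + m y, fun x y => add_comm _ _⟩ (e j) := by
  have key : ∀ (s : Sym2 (Fin k)), ¬ s.IsDiag →
      (∑ i, m i * (if i ∈ s then 1 else 0))
        = Sym2.lift ⟨fun x y => m x + m y, fun x y => add_comm _ _⟩ s := by
    intro s hs
    induction s using Sym2.ind with
    | _ x y =>
      have hxy : x ≠ y := by simpa using hs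
      rw [Sym2.lift_mk]
      simp only [mul_ite, mul_one, mul_zero]
      rw [Finset.sum_congr rfl (fun i _ => by
        simp only [Sym2.mem_iff, Finset.mem_insert, Finset.mem_singleton] :
          ∀ i ∈ univ, _ = if i ∈ ({x, y} : Finset (Fin k)) then m i else 0)]
      rw [Finset.sum_ite_mem, Finset.univ_inter, Finset.sum_pair hxy]
  simp only [Matrix.vecMul, dotProduct, inc, Matrix.of_apply]
  exact key (e j) (hnd j)

lemma wt_vecMul {k n : ℕ} (m : Fin k → ZMod 2) (e : Fin n → Sym2 (Fin k))
    (hnd : ∀ j, ¬ (e j).IsDiag) :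
    wt (Matrix.vecMul m (inc e)) = (univ.filter fun j => qm m (e j)).card := by
  unfold wt
  refine congrArg Finset.card (Finset.filter_congr fun j _ => ?_)
  rw [vecMul_inc m e hnd j]
  exact Iff.rfl
lemma card_Ens (k n : ℕ) : Nat.card (Ens k n) = (k.choose 2).descFactorial n := by
  rw [Nat.card_eq_fintype_card]
  have E : Ens k n ≃ (Fin n ↪ {s : Sym2 (Fin k) // ¬ s.IsDiag}) :=
    { toFun := fun e => ⟨fun j => ⟨e.1 j, e.2.2 j⟩,
        fun a b h => e.2.1 (congrArg Subtype.val h)⟩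
      invFun := fun f => ⟨fun j => (f j).1,
        fun a b h => f.injective (Subtype.ext h), fun j => (f j).2⟩
      left_inv := fun e => rfl
      right_inv := fun f => by ext j; rfl }
  rw [Fintype.card_congr E, Fintype.card_embedding_eq, Sym2.card_subtype_not_diag,
    Fintype.card_fin, Fintype.card_fin]

lemma zmod2_eq_one {a : ZMod 2} (h : a ≠ 0) : a = 1 := by
  revert h; revert a; decide

lemma card_wt (k u : ℕ) :
    Nat.card {m : Fin k → ZMod 2 // wt m = u} = k.choose u := by
  rw [Nat.card_eq_fintype_card]
  have E : {m : Fin k → ZMod 2 // wt m = u} ≃ {S : Finset (Fin k) // S.card = u} :=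
    { toFun := fun m => ⟨univ.filter fun i => m.1 i ≠ 0, m.2⟩
      invFun := fun S => ⟨fun i => if i ∈ S.1 then 1 else 0, by
        have : (univ.filter fun i => (if i ∈ S.1 then (1 : ZMod 2) else 0) ≠ 0) = S.1 := by
          ext i; by_cases hi : i ∈ S.1 <;> simp [hi]
        simpa [wt] using this ▸ S.2⟩
      left_inv := fun m => by
        apply Subtype.ext; funext i
        by_cases hi : m.1 i ≠ 0 <;> simp [hi]
        · exact (zmod2_eq_one hi).symm
        · exact (not_not.mp hi).symm
      right_inv := fun S => by
        apply Subtype.ext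
        ext i; by_cases hi : i ∈ S.1 <;> simp [hi] }
  rw [Fintype.card_congr E, Fintype.card_finset_len, Fintype.card_fin]

def crossMap {k : ℕ} (m : Fin k → ZMod 2)
    (x : {i : Fin k // m i ≠ 0} × {i : Fin k // ¬ m i ≠ 0}) :
    {s : Sym2 (Fin k) // ¬ s.IsDiag ∧ qm m s} :=
  ⟨s(x.1.1, x.2.1), by
    constructor
    · simp only [Sym2.mk_isDiag_iff]
      intro h
      exact x.2.2 (h ▸ x.1.2)
    · have h2 : m x.2.1 = 0 := not_not.mp x.2.2
      simp only [qm, Sym2.lift_mk, h2, add_zero]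
      exact x.1.2⟩

lemma crossMap_bij {k : ℕ} (m : Fin k → ZMod 2) : Function.Bijective (crossMap m) := by
  constructor
  · rintro ⟨a, b⟩ ⟨a', b'⟩ h
    have h' : s(a.1, b.1) = s(a'.1, b'.1) := congrArg Subtype.val h
    rw [Sym2.eq_iff] at h'
    rcases h' with ⟨h1, h2⟩ | ⟨h1, h2⟩
    · exact Prod.ext (Subtype.ext h1) (Subtype.ext h2)
    · exact absurd (h1 ▸ a.2) b'.2
  · rintro ⟨s, hs⟩
    revert hs
    induction s using Sym2.ind with
    | _ x y =>
      intro hs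
      obtain ⟨hd, hq⟩ := hs
      have hq' : m x + m y ≠ 0 := by simpa [qm] using hq
      by_cases hx : m x ≠ 0
      · have hy : ¬ m y ≠ 0 := by
          intro hy
          rw [zmod2_eq_one hx, zmod2_eq_one hy] at hq'
          exact hq' (by decide)
        exact ⟨⟨⟨x, hx⟩, ⟨y, hy⟩⟩, rfl⟩
      · have hx0 : m x = 0 := not_not.mp hx
        have hy : m y ≠ 0 := by
          intro hy0
          exact hq' (by rw [hx0, hy0, add_zero])
        refine ⟨⟨⟨y, hy⟩, ⟨x, hx⟩⟩, Subtype.ext ?_⟩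
        exact Sym2.eq_swap

lemma card_cross {k u : ℕ} (m : Fin k → ZMod 2) (hm : wt m = u) :
    Nat.card {s : Sym2 (Fin k) // ¬ s.IsDiag ∧ qm m s} = u * (k - u) := by
  rw [Nat.card_eq_fintype_card]
  rw [← Fintype.card_of_bijective (crossMap_bij m), Fintype.card_prod]
  have h1 : Fintype.card {i : Fin k // m i ≠ 0} = u := by
    rw [Fintype.card_subtype]; exact hm
  have h2 : Fintype.card {i : Fin k // ¬ m i ≠ 0} = k - u := by
    rw [Fintype.card_subtype_compl, h1, Fintype.card_fin]
  rw [h1, h2]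

lemma card_noncross {k u : ℕ} (m : Fin k → ZMod 2) (hm : wt m = u) :
    Nat.card {s : Sym2 (Fin k) // ¬ s.IsDiag ∧ ¬ qm m s} = k.choose 2 - u * (k - u)
      ∧ u * (k - u) ≤ k.choose 2 := by
  rw [Nat.card_eq_fintype_card, ← Nat.card_eq_fintype_card (α := {s : Sym2 (Fin k) // ¬ s.IsDiag ∧ ¬ qm m s})]
  have key : Nat.card {s : Sym2 (Fin k) // ¬ s.IsDiag ∧ qm m s}
      + Nat.card {s : Sym2 (Fin k) // ¬ s.IsDiag ∧ ¬ qm m s} = k.choose 2 := by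
    simp only [Nat.card_eq_fintype_card]
    rw [Fintype.card_subtype, Fintype.card_subtype]
    have e1 : (univ.filter fun s : Sym2 (Fin k) => ¬ s.IsDiag ∧ qm m s)
        = (univ.filter fun s : Sym2 (Fin k) => ¬ s.IsDiag).filter (fun s => qm m s) := by
      rw [Finset.filter_filter]
    have e2 : (univ.filter fun s : Sym2 (Fin k) => ¬ s.IsDiag ∧ ¬ qm m s)
        = (univ.filter fun s : Sym2 (Fin k) => ¬ s.IsDiag).filter (fun s => ¬ qm m s) := by
      rw [Finset.filter_filter]
    rw [e1, e2, Finset.card_filter_add_card_filter_not, ← Fintype.card_subtype,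
      Sym2.card_subtype_not_diag, Fintype.card_fin]
  rw [card_cross m hm] at key
  omega

lemma Auv_eq {k n u v : ℕ} (e : Fin n → Sym2 (Fin k)) :
    Auv e u v = Nat.card {m : Fin k → ZMod 2 //
      wt m = u ∧ wt (Matrix.vecMul m (inc e)) = v} := by
  rw [Auv]
  exact Nat.card_congr
    { toFun := fun p => ⟨p.1.1, p.2.1, by rw [p.2.2.2]; exact p.2.2.1⟩
      invFun := fun m => ⟨(m.1, Matrix.vecMul m.1 (inc e)), m.2.1, m.2.2, rfl⟩
      left_inv := fun p => Subtype.ext (Prod.ext rfl p.2.2.2)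
      right_inv := fun m => rfl }

lemma nat_card_sigma {α : Type*} [Fintype α] (f : α → Type*) [∀ a, Fintype (f a)] :
    Nat.card (Σ a, f a) = ∑ a, Nat.card (f a) := by
  rw [Nat.card_eq_fintype_card, Fintype.card_sigma]
  exact Finset.sum_congr rfl fun a _ => (Nat.card_eq_fintype_card).symm

lemma sum_Auv (k n u v : ℕ) (hv : v ≤ n) :
    ∑ G : Ens k n, Auv G.1 u v
      = k.choose u * (n.choose v * ((u * (k - u)).descFactorial v
          * (k.choose 2 - u * (k - u)).descFactorial (n - v))) := by
  have step1 : ∑ G : Ens k n, Auv G.1 u v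
      = ∑ G : Ens k n, Nat.card {m : Fin k → ZMod 2 //
          wt m = u ∧ wt (Matrix.vecMul m (inc G.1)) = v} :=
    Finset.sum_congr rfl fun G _ => Auv_eq G.1
  rw [step1, ← nat_card_sigma]
  have swap : (Σ G : Ens k n, {m : Fin k → ZMod 2 //
        wt m = u ∧ wt (Matrix.vecMul m (inc G.1)) = v})
      ≃ (Σ m : {m : Fin k → ZMod 2 // wt m = u},
          {G : Ens k n // wt (Matrix.vecMul m.1 (inc G.1)) = v}) :=
    { toFun := fun x => ⟨⟨x.2.1, x.2.2.1⟩, x.1, x.2.2.2⟩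
      invFun := fun x => ⟨x.2.1, x.1.1, x.1.2, x.2.2⟩
      left_inv := fun x => rfl
      right_inv := fun x => rfl }
  rw [Nat.card_congr swap, nat_card_sigma]
  have inner : ∀ m : {m : Fin k → ZMod 2 // wt m = u},
      Nat.card {G : Ens k n // wt (Matrix.vecMul m.1 (inc G.1)) = v}
        = n.choose v * ((u * (k - u)).descFactorial v
            * (k.choose 2 - u * (k - u)).descFactorial (n - v)) := by
    intro m
    have E1 : {G : Ens k n // wt (Matrix.vecMul m.1 (inc G.1)) = v}
        ≃ {e : Fin n → Sym2 (Fin k) //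
            (Function.Injective e ∧ ∀ j, ¬ (e j).IsDiag)
              ∧ (univ.filter fun j => qm m.1 (e j)).card = v} :=
      (Equiv.subtypeSubtypeEquivSubtypeInter IsGraph (fun e => wt (Matrix.vecMul m.1 (inc e)) = v)).trans
        (Equiv.subtypeEquivRight fun e => by
          constructor
          · rintro ⟨hg, hw⟩
            exact ⟨hg, by rw [← wt_vecMul m.1 e hg.2]; exact hw⟩
          · rintro ⟨hg, hw⟩
            exact ⟨hg, by rw [wt_vecMul m.1 e hg.2]; exact hw⟩)
    rw [Nat.card_congr E1, count_split (fun s => ¬ s.IsDiag) (qm m.1),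
      card_cross m.1 m.2, (card_noncross m.1 m.2).1, mul_assoc]
  rw [Finset.sum_congr rfl fun m _ => inner m, Finset.sum_const, Finset.card_univ,
    ← Nat.card_eq_fintype_card, card_wt, smul_eq_mul]

theorem stmt7 (k n u v : ℕ) (hu : u ≤ k) (hv : v ≤ n) :
    (∑ G : Ens k n, (Auv G.1 u v : ℝ)) / Nat.card (Ens k n)
      = (k.choose u * (u * (k - u)).choose v
            * (k.choose 2 - u * (k - u)).choose (n - v) : ℝ) / (k.choose 2).choose n := by
  have hsum : (∑ G : Ens k n, (Auv G.1 u v : ℝ)) = ((∑ G : Ens k n, Auv G.1 u v : ℕ) : ℝ) := by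
    push_cast; rfl
  rw [hsum, sum_Auv k n u v hv, card_Ens]
  set N := k.choose 2
  set a := u * (k - u)
  by_cases h : n ≤ N
  · have hD : (0 : ℝ) < (N.descFactorial n : ℝ) := by
      have : N.descFactorial n ≠ 0 := fun h0 =>
        absurd (Nat.descFactorial_eq_zero_iff_lt.mp h0) (not_lt.mpr h)
      exact_mod_cast Nat.pos_of_ne_zero this
    have hC : (0 : ℝ) < ((N.choose n : ℕ) : ℝ) := by
      exact_mod_cast Nat.choose_pos h
    rw [div_eq_div_iff (ne_of_gt hD) (ne_of_gt hC)]
    have key : (k.choose u * (n.choose v * (a.descFactorial v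
          * (N - a).descFactorial (n - v)))) * N.choose n
        = k.choose u * a.choose v * (N - a).choose (n - v) * N.descFactorial n := by
      rw [Nat.descFactorial_eq_factorial_mul_choose a v,
        Nat.descFactorial_eq_factorial_mul_choose (N - a) (n - v),
        Nat.descFactorial_eq_factorial_mul_choose N n,
        ← Nat.choose_mul_factorial_mul_factorial hv]
      ring
    exact_mod_cast key
  · push_neg at h
    rw [Nat.descFactorial_eq_zero_iff_lt.mpr h, Nat.choose_eq_zero_of_lt h]
    norm_num
end
end

section
/- For a uniformly random G from the ensemble G_{k,n}, the expected number of vectors m ∈ F_2^k with m M(G) = 0 equals Σ_{u=0}^{k} C(k,u) C(C(k,2) - u(k-u), n) / C(C(k,2), n). -/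
open scoped Classical

noncomputable section

open Finset

section Aux
variable {k n : ℕ}

/-- count of injective labelings avoiding bad pairs -/
lemma card_inj_funs (P : Sym2 (Fin k) → Prop) :
    Nat.card {e : Fin n → Sym2 (Fin k) // Function.Injective e ∧ ∀ j, P (e j)}
      = (Nat.card {s : Sym2 (Fin k) // P s}).descFactorial n := by
  classical
  rw [Nat.card_eq_fintype_card, Nat.card_eq_fintype_card]
  have eqv : {e : Fin n → Sym2 (Fin k) // Function.Injective e ∧ ∀ j, P (e j)}
      ≃ (Fin n ↪ {s : Sym2 (Fin k) // P s}) :=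
    { toFun := fun e => ⟨fun j => ⟨e.1 j, e.2.2 j⟩,
        fun a b h => e.2.1 (congrArg Subtype.val h)⟩
      invFun := fun f => ⟨fun j => (f j).1,
        ⟨fun a b h => f.injective (Subtype.ext h), fun j => (f j).2⟩⟩
      left_inv := fun e => rfl
      right_inv := fun f => rfl }
  rw [Fintype.card_congr eqv, Fintype.card_embedding_eq, Fintype.card_fin]

def Qm (m : Fin k → ZMod 2) (s : Sym2 (Fin k)) : Prop :=
  ∀ a ∈ s, ∀ b ∈ s, m a = m b

lemma zmod2_add_eq_zero (x y : ZMod 2) : x + y = 0 ↔ x = y := by revert x y; decide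

lemma vecMul_eq_zero_iff (m : Fin k → ZMod 2) (e : Fin n → Sym2 (Fin k))
    (hd : ∀ j, ¬ (e j).IsDiag) :
    Matrix.vecMul m (inc e) = 0 ↔ ∀ j, Qm m (e j) := by
  classical
  have key : ∀ s : Sym2 (Fin k), ¬ s.IsDiag →
      ((∑ i, m i * (if i ∈ s then 1 else 0)) = 0 ↔ Qm m s) := by
    intro s hs
    induction s using Sym2.ind with
    | _ a b =>
      have hab : a ≠ b := by simpa [Sym2.isDiag_iff_proj_eq] using hs
      have h1 : (∑ i, m i * (if i ∈ s(a, b) then 1 else 0)) = m a + m b := by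
        have : ∀ i : Fin k, m i * (if i ∈ s(a, b) then 1 else 0)
            = if i ∈ ({a, b} : Finset (Fin k)) then m i else 0 := by
          intro i
          by_cases h : i ∈ ({a, b} : Finset (Fin k))
          · have h' : i ∈ s(a, b) := by
              simp only [Finset.mem_insert, Finset.mem_singleton] at h
              simp [Sym2.mem_iff, h]
            simp [h, h']
          · have h' : i ∉ s(a, b) := by
              simp only [Finset.mem_insert, Finset.mem_singleton] at h
              simp [Sym2.mem_iff, h]
            simp [h, h']
        rw [Finset.sum_congr rfl fun i _ => this i, Finset.sum_ite_mem,
          Finset.univ_inter, Finset.sum_pair hab]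
      rw [h1, zmod2_add_eq_zero]
      constructor
      · intro h x hx y hy
        rw [Sym2.mem_iff] at hx hy
        rcases hx with rfl | rfl <;> rcases hy with rfl | rfl <;>
          first | rfl | exact h | exact h.symm
      · intro h
        exact h a (Sym2.mem_mk_left a b) b (Sym2.mem_mk_right a b)
  constructor
  · intro h j
    have hj := congrFun h j
    rw [← key (e j) (hd j)]
    simpa [Matrix.vecMul, dotProduct, inc] using hj
  · intro h
    funext j
    have := (key (e j) (hd j)).2 (h j)
    simpa [Matrix.vecMul, dotProduct, inc] using this

lemma card_bad (m : Fin k → ZMod 2) :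
    (univ.filter fun s : Sym2 (Fin k) => ¬ s.IsDiag ∧ ¬ Qm m s).card
      = wt m * (k - wt m) := by
  classical
  set S : Finset (Fin k) := univ.filter fun i => m i ≠ 0 with hS
  have hmne : ∀ a b : Fin k, m a ≠ m b ↔ (a ∈ S ↔ b ∉ S) := by
    intro a b
    simp only [hS, mem_filter, mem_univ, true_and]
    exact (show ∀ x y : ZMod 2, x ≠ y ↔ ((x ≠ 0) ↔ ¬ y ≠ 0) by decide) (m a) (m b)
  have : (S ×ˢ Sᶜ).card = (univ.filter fun s : Sym2 (Fin k) => ¬ s.IsDiag ∧ ¬ Qm m s).card := by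
    apply Finset.card_bij (fun p _ => s(p.1, p.2))
    · rintro ⟨a, b⟩ hab
      simp only [mem_product, mem_compl] at hab
      have hne : m a ≠ m b := (hmne a b).2 (iff_of_true hab.1 hab.2)
      have hab' : a ≠ b := fun h => hne (by rw [h])
      simp only [mem_filter, mem_univ, true_and]
      refine ⟨by simpa [Sym2.isDiag_iff_proj_eq] using hab', ?_⟩
      intro hq
      exact hne (hq a (Sym2.mem_mk_left a b) b (Sym2.mem_mk_right a b))
    · rintro ⟨a, b⟩ h1 ⟨c, d⟩ h2 h
      simp only [mem_product, mem_compl] at h1 h2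
      rw [Sym2.eq_iff] at h
      rcases h with ⟨rfl, rfl⟩ | ⟨rfl, rfl⟩
      · rfl
      · exact absurd h2.1 h1.2
    · rintro s hs
      simp only [mem_filter, mem_univ, true_and] at hs
      induction s using Sym2.ind with
      | _ a b =>
        obtain ⟨hd, hq⟩ := hs
        have hne : m a ≠ m b := by
          intro h
          apply hq
          intro x hx y hy
          rw [Sym2.mem_iff] at hx hy
          rcases hx with rfl | rfl <;> rcases hy with rfl | rfl <;>
            first | rfl | exact h | exact h.symm
        rcases (hmne a b).1 hne with hiff
        by_cases ha : a ∈ S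
        · exact ⟨(a, b), by simp [mem_product, ha, hiff.1 ha], rfl⟩
        · have hb : b ∈ S := not_not.1 fun hb => ha (hiff.2 hb)
          exact ⟨(b, a), by simp [mem_product, hb, ha], Sym2.eq_swap⟩
  rw [← this, Finset.card_product, Finset.card_compl, Fintype.card_fin]
  rfl

lemma card_good (m : Fin k → ZMod 2) :
    Nat.card {s : Sym2 (Fin k) // ¬ s.IsDiag ∧ Qm m s}
      = k.choose 2 - wt m * (k - wt m) := by
  classical
  rw [Nat.card_eq_fintype_card]
  have hsplit := Finset.card_filter_add_card_filter_not (s := univ.filter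
    fun s : Sym2 (Fin k) => ¬ s.IsDiag) (fun s => Qm m s)
  rw [Finset.filter_filter, Finset.filter_filter] at hsplit
  have hnd : (univ.filter fun s : Sym2 (Fin k) => ¬ s.IsDiag).card = k.choose 2 := by
    rw [← Fintype.card_subtype, Sym2.card_subtype_not_diag, Fintype.card_fin]
  have hbad := card_bad m
  rw [Fintype.card_subtype]
  omega

lemma card_wt_eq (u : ℕ) :
    (univ.filter fun m : Fin k → ZMod 2 => wt m = u).card = k.choose u := by
  classical
  have : (univ.filter fun m : Fin k → ZMod 2 => wt m = u).card
      = (Finset.powersetCard u (univ : Finset (Fin k))).card := by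
    apply Finset.card_bij (fun m _ => univ.filter fun i => m i ≠ 0)
    · intro m hm
      simp only [mem_filter, mem_univ, true_and] at hm
      rw [Finset.mem_powersetCard]
      exact ⟨Finset.subset_univ _, hm⟩
    · intro m1 h1 m2 h2 h
      funext i
      have hi := Finset.ext_iff.1 h i
      simp only [mem_filter, mem_univ, true_and] at hi
      exact (show ∀ x y : ZMod 2, ((x ≠ 0) ↔ (y ≠ 0)) → x = y by decide) _ _ hi
    · intro A hA
      rw [Finset.mem_powersetCard] at hA
      refine ⟨fun i => if i ∈ A then 1 else 0, ?_, ?_⟩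
      · rw [mem_filter]; simp only [mem_univ, true_and, wt]
        rw [← hA.2]
        congr 1
        ext i
        by_cases h : i ∈ A <;> simp [h]
      · ext i
        by_cases h : i ∈ A <;> simp [h]
  rw [this, Finset.card_powersetCard, Finset.card_univ, Fintype.card_fin]

end Aux

theorem stmt8 (k n : ℕ) :
    (∑ G : Ens k n, (TG G.1 : ℝ)) / Nat.card (Ens k n)
      = ∑ u ∈ Finset.range (k + 1),
          (k.choose u * (k.choose 2 - u * (k - u)).choose n : ℝ) / (k.choose 2).choose n := by
  classical
  have hEns : Nat.card (Ens k n) = (k.choose 2).descFactorial n := by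
    have h1 : Nat.card (Ens k n)
        = Nat.card {e : Fin n → Sym2 (Fin k) //
            Function.Injective e ∧ ∀ j, ¬ (e j).IsDiag} :=
      Nat.card_congr (Equiv.subtypeEquivRight fun e => Iff.rfl)
    have base := Sym2.card_subtype_not_diag (α := Fin k)
    rw [Fintype.card_fin] at base
    rw [h1, card_inj_funs (fun s => ¬ s.IsDiag), Nat.card_eq_fintype_card, base]
  have hcount : ∀ m : Fin k → ZMod 2,
      (Finset.univ.filter fun G : Ens k n => Matrix.vecMul m (inc G.1) = 0).card
        = (k.choose 2 - wt m * (k - wt m)).descFactorial n := by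
    intro m
    have h0 : (Finset.univ.filter fun G : Ens k n => Matrix.vecMul m (inc G.1) = 0).card
        = Nat.card {G : Ens k n // Matrix.vecMul m (inc G.1) = 0} := by
      rw [Nat.card_eq_fintype_card, Fintype.card_subtype]
    rw [h0]
    have e1 : {G : Ens k n // Matrix.vecMul m (inc G.1) = 0}
        ≃ {e : Fin n → Sym2 (Fin k) //
            Function.Injective e ∧ ∀ j, ¬ (e j).IsDiag ∧ Qm m (e j)} :=
      { toFun := fun G => ⟨G.1.1, G.1.2.1, fun j =>
          ⟨G.1.2.2 j, (vecMul_eq_zero_iff m G.1.1 G.1.2.2).1 G.2 j⟩⟩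
        invFun := fun e => ⟨⟨e.1, e.2.1, fun j => (e.2.2 j).1⟩,
          (vecMul_eq_zero_iff m e.1 fun j => (e.2.2 j).1).2 fun j => (e.2.2 j).2⟩
        left_inv := fun _ => rfl
        right_inv := fun _ => rfl }
    rw [Nat.card_congr e1, card_inj_funs (fun s => ¬ s.IsDiag ∧ Qm m s), card_good]
  have hN : (∑ G : Ens k n, TG G.1)
      = ∑ u ∈ Finset.range (k + 1),
          k.choose u * (k.choose 2 - u * (k - u)).descFactorial n := by
    have hTG : ∀ G : Ens k n, TG G.1
        = ∑ m : Fin k → ZMod 2, if Matrix.vecMul m (inc G.1) = 0 then 1 else 0 := by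
      intro G
      rw [show TG G.1 = Nat.card {m : Fin k → ZMod 2 //
          Matrix.vecMul m (inc G.1) = 0} from rfl,
        Nat.card_eq_fintype_card, Fintype.card_subtype, Finset.card_filter]
    rw [Finset.sum_congr rfl fun G _ => hTG G, Finset.sum_comm]
    have hstep : ∀ m : Fin k → ZMod 2,
        (∑ G : Ens k n, if Matrix.vecMul m (inc G.1) = 0 then 1 else 0)
          = (k.choose 2 - wt m * (k - wt m)).descFactorial n := by
      intro m
      rw [← Finset.card_filter]
      exact hcount m
    rw [Finset.sum_congr rfl fun m _ => hstep m]
    have hwt : ∀ m : Fin k → ZMod 2, m ∈ (Finset.univ : Finset _) →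
        wt m ∈ Finset.range (k + 1) := by
      intro m _
      rw [Finset.mem_range, Nat.lt_succ_iff]
      calc wt m ≤ (Finset.univ : Finset (Fin k)).card := Finset.card_filter_le _ _
        _ = k := by rw [Finset.card_univ, Fintype.card_fin]
    rw [← Finset.sum_fiberwise_of_maps_to hwt
      (fun m => (k.choose 2 - wt m * (k - wt m)).descFactorial n)]
    refine Finset.sum_congr rfl fun u hu => ?_
    rw [Finset.sum_congr rfl fun m hm => by rw [(Finset.mem_filter.1 hm).2],
      Finset.sum_const, card_wt_eq, smul_eq_mul]
  have hf : (n.factorial : ℝ) ≠ 0 := Nat.cast_ne_zero.2 n.factorial_ne_zero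
  calc (∑ G : Ens k n, (TG G.1 : ℝ)) / Nat.card (Ens k n)
      = ((∑ u ∈ Finset.range (k + 1),
          k.choose u * (k.choose 2 - u * (k - u)).descFactorial n : ℕ) : ℝ)
          / ((k.choose 2).descFactorial n : ℕ) := by
        rw [← Nat.cast_sum, hN, hEns]
    _ = _ := by
        rw [Nat.cast_sum, Finset.sum_div]
        refine Finset.sum_congr rfl fun u hu => ?_
        rw [Nat.descFactorial_eq_factorial_mul_choose,
          Nat.descFactorial_eq_factorial_mul_choose]
        push_cast
        rw [show (k.choose u : ℝ) * ((n.factorial : ℝ)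
            * ((k.choose 2 - u * (k - u)).choose n : ℝ))
          = (n.factorial : ℝ) * ((k.choose u : ℝ)
            * ((k.choose 2 - u * (k - u)).choose n : ℝ)) by ring,
          mul_div_mul_left _ _ hf]
end
end

section
/- The probability P_U(k,n) that a uniformly random graph from the ensemble G_{k,n} is unconnected satisfies P_U(k,n) ≤ (1/2) Σ_{u=0}^{k} C(k,u) C(C(k,2) - u(k-u), n) / C(C(k,2), n) - 1. -/
open scoped Classical

noncomputable section

namespace Stmt10Aux

variable {k n : ℕ}

lemma crosses_compl {U : Finset (Fin k)} {s : Sym2 (Fin k)} (h : crosses Uᶜ s) :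
    crosses U s := by
  obtain ⟨a, b, rfl, ha, hb⟩ := h
  exact ⟨b, a, Sym2.eq_swap, by simpa using hb, by simpa using ha⟩

lemma not_crosses_empty (s : Sym2 (Fin k)) : ¬ crosses (∅ : Finset (Fin k)) s := by
  rintro ⟨a, b, _, ha, _⟩; simp at ha

lemma not_crosses_univ (s : Sym2 (Fin k)) : ¬ crosses (Finset.univ : Finset (Fin k)) s := by
  rintro ⟨a, b, _, _, hb⟩; simp at hb

lemma crosses_not_isDiag {U : Finset (Fin k)} {s : Sym2 (Fin k)} (h : crosses U s) :
    ¬ s.IsDiag := by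
  obtain ⟨a, b, rfl, ha, hb⟩ := h
  rw [Sym2.mk_isDiag_iff]
  rintro rfl; exact hb ha

lemma card_crosses (U : Finset (Fin k)) :
    (Finset.univ.filter fun s : Sym2 (Fin k) => crosses U s).card = U.card * (k - U.card) := by
  have himg : (Finset.univ.filter fun s : Sym2 (Fin k) => crosses U s)
      = (U ×ˢ Uᶜ).image fun p => s(p.1, p.2) := by
    ext s
    simp only [Finset.mem_filter, Finset.mem_univ, true_and, Finset.mem_image,
      Finset.mem_product, Finset.mem_compl]
    constructor
    · rintro ⟨a, b, rfl, ha, hb⟩; exact ⟨(a, b), ⟨ha, hb⟩, rfl⟩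
    · rintro ⟨⟨a, b⟩, ⟨ha, hb⟩, rfl⟩; exact ⟨a, b, rfl, ha, hb⟩
  rw [himg, Finset.card_image_of_injOn, Finset.card_product, Finset.card_compl,
    Fintype.card_fin]
  rintro ⟨a, b⟩ hab ⟨c, d⟩ hcd h
  simp only [Finset.mem_coe, Finset.mem_product, Finset.mem_compl] at hab hcd
  rw [Sym2.eq_iff] at h
  rcases h with ⟨rfl, rfl⟩ | ⟨rfl, rfl⟩
  · rfl
  · exact absurd hab.1 hcd.2

lemma card_allowed (U : Finset (Fin k)) :
    Fintype.card {s : Sym2 (Fin k) // ¬ s.IsDiag ∧ ¬ crosses U s}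
      = k.choose 2 - U.card * (k - U.card) := by
  have h1 : Fintype.card {s : Sym2 (Fin k) // ¬ s.IsDiag ∧ ¬ crosses U s}
      = ((Finset.univ.filter fun s : Sym2 (Fin k) => ¬ s.IsDiag) \
         (Finset.univ.filter fun s : Sym2 (Fin k) => crosses U s)).card := by
    rw [Fintype.card_subtype]
    congr 1
    ext s
    simp only [Finset.mem_filter, Finset.mem_univ, true_and, Finset.mem_sdiff]
  have h2 : (Finset.univ.filter fun s : Sym2 (Fin k) => ¬ s.IsDiag).card = k.choose 2 := by
    rw [← Fintype.card_subtype, Sym2.card_subtype_not_diag, Fintype.card_fin]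
  rw [h1, Finset.card_sdiff_of_subset, card_crosses, h2]
  intro s hs
  simp only [Finset.mem_filter, Finset.mem_univ, true_and] at hs ⊢
  exact crosses_not_isDiag hs

def goodEquiv (U : Finset (Fin k)) :
    {e : Ens k n // ∀ j, ¬ crosses U (e.1 j)} ≃
      (Fin n ↪ {s : Sym2 (Fin k) // ¬ s.IsDiag ∧ ¬ crosses U s}) where
  toFun e := ⟨fun j => ⟨e.1.1 j, e.1.2.2 j, e.2 j⟩,
    fun j j' h => e.1.2.1 (congrArg Subtype.val h)⟩
  invFun f := ⟨⟨fun j => (f j).1, fun j j' h => f.injective (Subtype.ext h),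
    fun j => (f j).2.1⟩, fun j => (f j).2.2⟩
  left_inv e := rfl
  right_inv f := rfl

lemma card_filter_good (U : Finset (Fin k)) :
    (Finset.univ.filter fun e : Ens k n => ∀ j, ¬ crosses U (e.1 j)).card
      = (k.choose 2 - U.card * (k - U.card)).descFactorial n := by
  rw [← Fintype.card_subtype, Fintype.card_congr (goodEquiv U),
    Fintype.card_embedding_eq, Fintype.card_fin, card_allowed]

lemma card_ens : Fintype.card (Ens k n) = (k.choose 2).descFactorial n := by
  have h := card_filter_good (k := k) (n := n) ∅
  rw [Finset.filter_true_of_mem (fun e _ => fun j => not_crosses_empty _)] at h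
  simpa using h
lemma two_le (hk : 2 ≤ k) (e : Ens k n) :
    2 ≤ (Finset.univ.filter fun U : Finset (Fin k) => ∀ j, ¬ crosses U (e.1 j)).card := by
  haveI : Nonempty (Fin k) := ⟨⟨0, by omega⟩⟩
  have hsub : ({∅, Finset.univ} : Finset (Finset (Fin k)))
      ⊆ Finset.univ.filter fun U : Finset (Fin k) => ∀ j, ¬ crosses U (e.1 j) := by
    intro U hU
    simp only [Finset.mem_insert, Finset.mem_singleton] at hU
    rcases hU with rfl | rfl
    · exact Finset.mem_filter.2 ⟨Finset.mem_univ _, fun j => not_crosses_empty _⟩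
    · exact Finset.mem_filter.2 ⟨Finset.mem_univ _, fun j => not_crosses_univ _⟩
  have h2 : ({∅, Finset.univ} : Finset (Finset (Fin k))).card = 2 := by
    rw [Finset.card_insert_of_notMem (by simp [Finset.eq_empty_iff_forall_notMem,
      (Finset.univ_nonempty (α := Fin k)).ne_empty.symm]), Finset.card_singleton]
  calc 2 = ({∅, Finset.univ} : Finset (Finset (Fin k))).card := h2.symm
    _ ≤ _ := Finset.card_le_card hsub

lemma four_le (hk : 2 ≤ k) (e : Ens k n) (hd : ¬ (toGraph e.1).Connected) :
    4 ≤ (Finset.univ.filter fun U : Finset (Fin k) => ∀ j, ¬ crosses U (e.1 j)).card := by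
  haveI : Nonempty (Fin k) := ⟨⟨0, by omega⟩⟩
  set G := toGraph e.1 with hG
  set v0 : Fin k := ⟨0, by omega⟩
  set U0 : Finset (Fin k) := Finset.univ.filter fun v => G.Reachable v0 v with hU0
  have hv0 : v0 ∈ U0 := Finset.mem_filter.2 ⟨Finset.mem_univ _, SimpleGraph.Reachable.refl v0⟩
  obtain ⟨w, hw⟩ : ∃ w, w ∉ U0 := by
    by_contra hall
    push_neg at hall
    refine hd ((SimpleGraph.connected_iff _).2 ⟨fun a b => ?_, inferInstance⟩)
    have ha := Finset.mem_filter.1 (hall a)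
    have hb := Finset.mem_filter.1 (hall b)
    exact ha.2.symm.trans hb.2
  have hnc : ∀ j, ¬ crosses U0 (e.1 j) := by
    rintro j ⟨a, b, hab, ha, hb⟩
    apply hb
    have hne : a ≠ b := fun h => hb (h ▸ ha)
    have hadj : G.Adj a b := by
      rw [hG, toGraph, SimpleGraph.fromEdgeSet_adj]
      exact ⟨hab ▸ ⟨j, rfl⟩, hne⟩
    exact Finset.mem_filter.2 ⟨Finset.mem_univ _,
      (Finset.mem_filter.1 ha).2.trans hadj.reachable⟩
  have hnc' : ∀ j, ¬ crosses U0ᶜ (e.1 j) := fun j h => hnc j (crosses_compl h)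
  have hsub : ({∅, Finset.univ, U0, U0ᶜ} : Finset (Finset (Fin k)))
      ⊆ Finset.univ.filter fun U : Finset (Fin k) => ∀ j, ¬ crosses U (e.1 j) := by
    intro U hU
    simp only [Finset.mem_insert, Finset.mem_singleton] at hU
    rcases hU with rfl | rfl | rfl | rfl
    · exact Finset.mem_filter.2 ⟨Finset.mem_univ _, fun j => not_crosses_empty _⟩
    · exact Finset.mem_filter.2 ⟨Finset.mem_univ _, fun j => not_crosses_univ _⟩
    · exact Finset.mem_filter.2 ⟨Finset.mem_univ _, hnc⟩
    · exact Finset.mem_filter.2 ⟨Finset.mem_univ _, hnc'⟩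
  have hwc : w ∈ U0ᶜ := Finset.mem_compl.2 hw
  have hv0c : v0 ∉ U0ᶜ := fun h => Finset.mem_compl.1 h hv0
  have h4 : ({∅, Finset.univ, U0, U0ᶜ} : Finset (Finset (Fin k))).card = 4 := by
    have e1 : (∅ : Finset (Fin k)) ≠ Finset.univ :=
      fun h => (Finset.univ_nonempty (α := Fin k)).ne_empty h.symm
    have e2 : (∅ : Finset (Fin k)) ≠ U0 := fun h => Finset.notMem_empty v0 (h ▸ hv0)
    have e3 : (∅ : Finset (Fin k)) ≠ U0ᶜ := fun h => Finset.notMem_empty w (h ▸ hwc)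
    have e4 : (Finset.univ : Finset (Fin k)) ≠ U0 := fun h => hw (h ▸ Finset.mem_univ w)
    have e5 : (Finset.univ : Finset (Fin k)) ≠ U0ᶜ := fun h => hv0c (h ▸ Finset.mem_univ v0)
    have e6 : U0 ≠ U0ᶜ := fun h => hv0c (h ▸ hv0)
    rw [Finset.card_insert_of_notMem (by simp [e1, e2, e3]),
      Finset.card_insert_of_notMem (by simp [e4, e5]),
      Finset.card_insert_of_notMem (by simp [e6]), Finset.card_singleton]
  calc 4 = ({∅, Finset.univ, U0, U0ᶜ} : Finset (Finset (Fin k))).card := h4.symm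
    _ ≤ _ := Finset.card_le_card hsub

lemma main_nat (hk : 2 ≤ k) :
    2 * Fintype.card (Ens k n)
      + 2 * (Finset.univ.filter fun e : Ens k n => ¬ (toGraph e.1).Connected).card
    ≤ ∑ u ∈ Finset.range (k + 1),
        k.choose u * (k.choose 2 - u * (k - u)).descFactorial n := by
  have hrhs : ∑ u ∈ Finset.range (k + 1),
        k.choose u * (k.choose 2 - u * (k - u)).descFactorial n
      = ∑ U : Finset (Fin k), (k.choose 2 - U.card * (k - U.card)).descFactorial n := by
    rw [← Finset.powerset_univ, Finset.sum_powerset, Finset.card_univ, Fintype.card_fin]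
    refine Finset.sum_congr rfl fun u hu => ?_
    rw [Finset.sum_congr rfl (fun t ht => by rw [(Finset.mem_powersetCard.1 ht).2]),
      Finset.sum_const, Finset.card_powersetCard, Finset.card_univ, Fintype.card_fin,
      smul_eq_mul]
  have hswap : ∑ U : Finset (Fin k),
        (Finset.univ.filter fun e : Ens k n => ∀ j, ¬ crosses U (e.1 j)).card
      = ∑ e : Ens k n,
        (Finset.univ.filter fun U : Finset (Fin k) => ∀ j, ¬ crosses U (e.1 j)).card := by
    simp_rw [Finset.card_filter]
    exact Finset.sum_comm
  have hlow : ∀ e : Ens k n, 2 + (if ¬ (toGraph e.1).Connected then 2 else 0)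
      ≤ (Finset.univ.filter fun U : Finset (Fin k) => ∀ j, ¬ crosses U (e.1 j)).card := by
    intro e
    by_cases h : (toGraph e.1).Connected
    · simpa [h] using two_le hk e
    · simpa [h] using four_le hk e h
  calc 2 * Fintype.card (Ens k n)
        + 2 * (Finset.univ.filter fun e : Ens k n => ¬ (toGraph e.1).Connected).card
      = ∑ e : Ens k n, (2 + (if ¬ (toGraph e.1).Connected then 2 else 0)) := by
        rw [Finset.sum_add_distrib, Finset.sum_const, Finset.card_univ, smul_eq_mul,
          mul_comm, ← Finset.sum_filter, Finset.sum_const, smul_eq_mul, mul_comm 2]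
    _ ≤ ∑ e : Ens k n,
        (Finset.univ.filter fun U : Finset (Fin k) => ∀ j, ¬ crosses U (e.1 j)).card :=
        Finset.sum_le_sum fun e _ => hlow e
    _ = ∑ U : Finset (Fin k),
        (Finset.univ.filter fun e : Ens k n => ∀ j, ¬ crosses U (e.1 j)).card := hswap.symm
    _ = ∑ U : Finset (Fin k), (k.choose 2 - U.card * (k - U.card)).descFactorial n :=
        Finset.sum_congr rfl fun U _ => card_filter_good U
    _ = _ := hrhs.symm

end Stmt10Aux


theorem stmt10 (k n : ℕ) (hk : 2 ≤ k) (hn : n ≤ k.choose 2) :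
    PU k n ≤ (1 / 2) * ∑ u ∈ Finset.range (k + 1),
        (k.choose u * (k.choose 2 - u * (k - u)).choose n : ℝ) / (k.choose 2).choose n
      - 1 := by
  have hT : 0 < (k.choose 2).descFactorial n :=
    Nat.pos_of_ne_zero fun h =>
      absurd (Nat.descFactorial_eq_zero_iff_lt.1 h) (not_lt.2 hn)
  have hC : 0 < (k.choose 2).choose n := Nat.choose_pos hn
  have hT' : (0 : ℝ) < ((k.choose 2).descFactorial n : ℝ) := by exact_mod_cast hT
  have hC' : (0 : ℝ) < ((k.choose 2).choose n : ℝ) := by exact_mod_cast hC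
  have key' : ∀ u : ℕ, (k.choose 2 - u * (k - u)).choose n * (k.choose 2).descFactorial n
      = (k.choose 2 - u * (k - u)).descFactorial n * (k.choose 2).choose n := fun u => by
    rw [Nat.descFactorial_eq_factorial_mul_choose, Nat.descFactorial_eq_factorial_mul_choose]
    ring
  have hsum : ∑ u ∈ Finset.range (k + 1),
        (k.choose u * (k.choose 2 - u * (k - u)).choose n : ℝ) / (k.choose 2).choose n
      = ((∑ u ∈ Finset.range (k + 1),
          k.choose u * (k.choose 2 - u * (k - u)).descFactorial n : ℕ) : ℝ)
        / ((k.choose 2).descFactorial n : ℝ) := by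
    push_cast
    rw [Finset.sum_div]
    refine Finset.sum_congr rfl fun u _ => ?_
    rw [div_eq_div_iff hC'.ne' hT'.ne']
    have hcst := congrArg (Nat.cast (R := ℝ)) (key' u)
    push_cast at hcst
    linear_combination (k.choose u : ℝ) * hcst
  have hnum : (Nat.card {G : Ens k n // ¬ (toGraph G.1).Connected} : ℝ)
      = ((Finset.univ.filter fun e : Ens k n => ¬ (toGraph e.1).Connected).card : ℝ) := by
    rw [Nat.card_eq_fintype_card, Fintype.card_subtype]
  have hden : (Nat.card (Ens k n) : ℝ) = (((k.choose 2).descFactorial n : ℕ) : ℝ) := by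
    rw [Nat.card_eq_fintype_card, Stmt10Aux.card_ens]
  have hkey : 2 * (k.choose 2).descFactorial n
      + 2 * (Finset.univ.filter fun e : Ens k n => ¬ (toGraph e.1).Connected).card
      ≤ ∑ u ∈ Finset.range (k + 1),
          k.choose u * (k.choose 2 - u * (k - u)).descFactorial n := by
    have := Stmt10Aux.main_nat (k := k) (n := n) hk
    rwa [Stmt10Aux.card_ens] at this
  have hkey' : 2 * ((k.choose 2).descFactorial n : ℝ)
      + 2 * ((Finset.univ.filter fun e : Ens k n => ¬ (toGraph e.1).Connected).card : ℝ)
      ≤ ((∑ u ∈ Finset.range (k + 1),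
          k.choose u * (k.choose 2 - u * (k - u)).descFactorial n : ℕ) : ℝ) := by
    exact_mod_cast hkey
  rw [PU, hnum, hden, hsum]
  set S : ℝ := ((∑ u ∈ Finset.range (k + 1),
      k.choose u * (k.choose 2 - u * (k - u)).descFactorial n : ℕ) : ℝ)
  set D : ℝ := ((Finset.univ.filter fun e : Ens k n => ¬ (toGraph e.1).Connected).card : ℝ)
  set T : ℝ := ((k.choose 2).descFactorial n : ℝ)
  rw [div_le_iff₀ hT']
  have hexp : (1 / 2 * (S / T) - 1) * T = S / 2 - T := by field_simp
  linarith
end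
end

section
/- The probability that a uniformly random graph from G_{k,n} is unconnected satisfies P_U(k,n) ≥ k ( C(C(k-1,2), n) - (k-1) C(C(k-2,2), n) ) / C(C(k,2), n). -/
open scoped Classical

noncomputable section

lemma aux_sym2_card {k : ℕ} (P : Fin k → Prop) :
    Nat.card {s : Sym2 (Fin k) // ¬ s.IsDiag ∧ ∀ x ∈ s, P x}
      = (Nat.card {x : Fin k // P x}).choose 2 := by
  classical
  have hinj : Function.Injective (Subtype.val : {x : Fin k // P x} → Fin k) :=
    Subtype.val_injective
  let F : {t : Sym2 {x : Fin k // P x} // ¬ t.IsDiag} →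
      {s : Sym2 (Fin k) // ¬ s.IsDiag ∧ ∀ x ∈ s, P x} := fun t =>
    ⟨t.1.map Subtype.val, by
      refine ⟨?_, ?_⟩
      · rw [Sym2.isDiag_map hinj]; exact t.2
      · intro x hx
        obtain ⟨y, hy, rfl⟩ := Sym2.mem_map.1 hx
        exact y.2⟩
  have hbij : Function.Bijective F := by
    constructor
    · intro a b hab
      have := congrArg Subtype.val hab
      exact Subtype.ext (Sym2.map.injective hinj this)
    · rintro ⟨s, hd, hP⟩
      induction s using Sym2.ind with
      | _ a b =>
        refine ⟨⟨s(⟨a, hP a (Sym2.mem_mk_left a b)⟩, ⟨b, hP b (Sym2.mem_mk_right a b)⟩), ?_⟩, ?_⟩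
        · rw [Sym2.mk_isDiag_iff] at hd ⊢
          exact fun h => hd (congrArg Subtype.val h)
        · apply Subtype.ext
          simp [F, Sym2.map_pair_eq]
  rw [← Nat.card_congr (Equiv.ofBijective F hbij), Nat.card_eq_fintype_card,
    Nat.card_eq_fintype_card, Sym2.card_subtype_not_diag]

lemma aux_ens_card {k n : ℕ} (P : Sym2 (Fin k) → Prop) :
    Nat.card {e : Fin n → Sym2 (Fin k) // IsGraph e ∧ ∀ j, P (e j)}
      = (Nat.card {s : Sym2 (Fin k) // ¬ s.IsDiag ∧ P s}).descFactorial n := by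
  classical
  let E : {e : Fin n → Sym2 (Fin k) // IsGraph e ∧ ∀ j, P (e j)} ≃
      (Fin n ↪ {s : Sym2 (Fin k) // ¬ s.IsDiag ∧ P s}) :=
    { toFun := fun e => ⟨fun j => ⟨e.1 j, e.2.1.2 j, e.2.2 j⟩,
        fun a b h => e.2.1.1 (congrArg Subtype.val h)⟩
      invFun := fun f => ⟨fun j => (f j).1, ⟨⟨fun a b h => f.injective (Subtype.ext h),
        fun j => (f j).2.1⟩, fun j => (f j).2.2⟩⟩
      left_inv := fun e => rfl
      right_inv := fun f => rfl }
  rw [Nat.card_congr E, Nat.card_eq_fintype_card, Nat.card_eq_fintype_card,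
    Fintype.card_embedding_eq, Fintype.card_fin]

lemma card_ne {k : ℕ} (i : Fin k) : Nat.card {x : Fin k // x ≠ i} = k - 1 := by
  rw [Nat.card_eq_fintype_card]
  have : Fintype.card {x : Fin k // ¬ x = i}
      = Fintype.card (Fin k) - Fintype.card {x : Fin k // x = i} :=
    Fintype.card_subtype_compl _
  simpa [Fintype.card_subtype_eq] using this

lemma card_ne2 {k : ℕ} (i j : Fin k) (hij : i ≠ j) :
    Nat.card {x : Fin k // x ≠ i ∧ x ≠ j} = k - 2 := by
  classical
  rw [Nat.card_congr (Equiv.subtypeEquivRight (q := fun x => ¬ (x = i ∨ x = j))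
    (fun x => by tauto)), Nat.card_eq_fintype_card, Fintype.card_subtype_compl,
    Fintype.card_subtype, Fintype.card_fin]
  congr 1
  have : (Finset.univ.filter fun x : Fin k => x = i ∨ x = j) = {i, j} := by
    ext x; simp
  rw [this, Finset.card_pair hij]

theorem stmt12 (k n : ℕ) (hk : 2 ≤ k) :
    PU k n ≥ (k : ℝ) * ((((k - 1).choose 2).choose n : ℝ)
        - ((k - 1 : ℕ) : ℝ) * (((k - 2).choose 2).choose n : ℝ)) / (k.choose 2).choose n := by
  classical
  by_cases hC0 : ((k.choose 2).choose n : ℕ) = 0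
  · rw [hC0]
    push_cast
    rw [div_zero]
    unfold PU
    positivity
  -- setup
  set A : Fin k → Finset (Ens k n) :=
    fun i => Finset.univ.filter fun G => ∀ j, i ∉ G.1 j with hA
  set U : Finset (Ens k n) := Finset.univ.biUnion A with hUdef
  have hAsub : ∀ i, A i ⊆ U := fun i => Finset.subset_biUnion_of_mem A (Finset.mem_univ i)
  -- cardinalities
  have hx : ∀ i, (A i).card = ((k-1).choose 2).descFactorial n := by
    intro i
    have h1 : (A i).card = Nat.card {G : Ens k n // ∀ j, i ∉ G.1 j} := by
      rw [Nat.card_eq_fintype_card, Fintype.card_subtype]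
    calc (A i).card = Nat.card {G : Ens k n // ∀ j, i ∉ G.1 j} := h1
      _ = Nat.card {e : Fin n → Sym2 (Fin k) // IsGraph e ∧ ∀ j, i ∉ e j} :=
          Nat.card_congr (Equiv.subtypeSubtypeEquivSubtypeInter IsGraph
            (fun e : Fin n → Sym2 (Fin k) => ∀ j, i ∉ e j))
      _ = (Nat.card {s : Sym2 (Fin k) // ¬ s.IsDiag ∧ i ∉ s}).descFactorial n :=
          aux_ens_card (fun s => i ∉ s)
      _ = (Nat.card {s : Sym2 (Fin k) // ¬ s.IsDiag ∧ ∀ x ∈ s, x ≠ i}).descFactorial n := by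
          congr 1
          exact Nat.card_congr (Equiv.subtypeEquivRight
            (fun s => and_congr_right fun _ =>
              ⟨fun h x hx hxi => h (hxi ▸ hx), fun h hi => h i hi rfl⟩))
      _ = ((k-1).choose 2).descFactorial n := by rw [aux_sym2_card, card_ne]
  have hy : ∀ i j : Fin k, i ≠ j →
      (A i ∩ A j).card = ((k-2).choose 2).descFactorial n := by
    intro i j hij
    have h0 : A i ∩ A j
        = Finset.univ.filter fun G : Ens k n => ∀ j', i ∉ G.1 j' ∧ j ∉ G.1 j' := by
      ext G
      simp [hA, Finset.mem_inter, Finset.mem_filter, forall_and]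
    have h1 : (A i ∩ A j).card
        = Nat.card {G : Ens k n // ∀ j', i ∉ G.1 j' ∧ j ∉ G.1 j'} := by
      rw [h0, Nat.card_eq_fintype_card, Fintype.card_subtype]
    calc (A i ∩ A j).card
        = Nat.card {G : Ens k n // ∀ j', i ∉ G.1 j' ∧ j ∉ G.1 j'} := h1
      _ = Nat.card {e : Fin n → Sym2 (Fin k) // IsGraph e ∧ ∀ j', i ∉ e j' ∧ j ∉ e j'} :=
          Nat.card_congr (Equiv.subtypeSubtypeEquivSubtypeInter IsGraph
            (fun e : Fin n → Sym2 (Fin k) => ∀ j', i ∉ e j' ∧ j ∉ e j'))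
      _ = (Nat.card {s : Sym2 (Fin k) // ¬ s.IsDiag ∧ (i ∉ s ∧ j ∉ s)}).descFactorial n :=
          aux_ens_card (fun s => i ∉ s ∧ j ∉ s)
      _ = (Nat.card {s : Sym2 (Fin k) // ¬ s.IsDiag ∧ ∀ x ∈ s, x ≠ i ∧ x ≠ j}).descFactorial n := by
          congr 1
          exact Nat.card_congr (Equiv.subtypeEquivRight
            (fun s => and_congr_right fun _ =>
              ⟨fun h x hx => ⟨fun e => h.1 (e ▸ hx), fun e => h.2 (e ▸ hx)⟩,
               fun h => ⟨fun hi => (h i hi).1 rfl, fun hj => (h j hj).2 rfl⟩⟩))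
      _ = ((k-2).choose 2).descFactorial n := by rw [aux_sym2_card, card_ne2 i j hij]
  have hN : Nat.card (Ens k n) = (k.choose 2).descFactorial n := by
    calc Nat.card (Ens k n)
        = Nat.card {e : Fin n → Sym2 (Fin k) // IsGraph e ∧ ∀ j : Fin n, (e j) = (e j)} :=
          Nat.card_congr (Equiv.subtypeEquivRight (fun e => by simp))
      _ = (Nat.card {s : Sym2 (Fin k) // ¬ s.IsDiag ∧ s = s}).descFactorial n :=
          aux_ens_card (fun s => s = s)
      _ = (Nat.card {s : Sym2 (Fin k) // ¬ s.IsDiag}).descFactorial n := by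
          congr 1
          exact Nat.card_congr (Equiv.subtypeEquivRight (fun s => by simp))
      _ = (k.choose 2).descFactorial n := by
          rw [Nat.card_eq_fintype_card, Sym2.card_subtype_not_diag, Fintype.card_fin]
  -- unconnectedness
  have hU : U ⊆ Finset.univ.filter fun G : Ens k n => ¬ (toGraph G.1).Connected := by
    intro G hG
    simp only [hUdef, Finset.mem_biUnion, Finset.mem_univ, true_and, hA,
      Finset.mem_filter] at hG
    obtain ⟨i, hi⟩ := hG
    simp only [Finset.mem_filter, Finset.mem_univ, true_and]
    intro hconn
    obtain ⟨v, hv⟩ := Fintype.exists_ne_of_one_lt_card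
      (by rw [Fintype.card_fin]; omega) i
    obtain ⟨w⟩ := hconn.preconnected i v
    cases w with
    | nil => exact hv rfl
    | cons ha _ =>
      rw [toGraph, SimpleGraph.fromEdgeSet_adj] at ha
      obtain ⟨⟨j, hj⟩, -⟩ := ha
      exact hi j (hj.symm ▸ Sym2.mem_mk_left i _)
  have hcount : U.card ≤ Nat.card {G : Ens k n // ¬ (toGraph G.1).Connected} := by
    rw [Nat.card_eq_fintype_card, Fintype.card_subtype]
    exact Finset.card_le_card hU
  -- Bonferroni
  set x : ℝ := (((k-1).choose 2).descFactorial n : ℝ) with hxdef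
  set y : ℝ := (((k-2).choose 2).descFactorial n : ℝ) with hydef
  have hsum1 : ∑ G ∈ U, (∑ i, if G ∈ A i then (1:ℝ) else 0) = k * x := by
    rw [Finset.sum_comm]
    have h1 : ∀ i : Fin k, ∑ G ∈ U, (if G ∈ A i then (1:ℝ) else 0) = x := by
      intro i
      rw [Finset.sum_boole, Finset.filter_mem_eq_inter,
        Finset.inter_eq_right.2 (hAsub i), hx i, hxdef]
    rw [Finset.sum_congr rfl (fun i _ => h1 i), Finset.sum_const, Finset.card_univ,
      Fintype.card_fin, nsmul_eq_mul]
  have hsum2 : ∑ G ∈ U, (∑ i, if G ∈ A i then (1:ℝ) else 0)^2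
      = k * x + k * ((k-1 : ℕ) : ℝ) * y := by
    have h2 : ∀ G : Ens k n, (∑ i, if G ∈ A i then (1:ℝ) else 0)^2
        = ∑ i : Fin k, ∑ j : Fin k, (if G ∈ A i ∩ A j then (1:ℝ) else 0) := by
      intro G
      rw [sq, Finset.sum_mul_sum]
      refine Finset.sum_congr rfl fun i _ => Finset.sum_congr rfl fun j _ => ?_
      by_cases h1 : G ∈ A i <;> by_cases h2 : G ∈ A j <;>
        simp [Finset.mem_inter, h1, h2]
    rw [Finset.sum_congr rfl (fun G _ => h2 G), Finset.sum_comm]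
    have h3 : ∀ i : Fin k, ∑ G ∈ U, ∑ j : Fin k, (if G ∈ A i ∩ A j then (1:ℝ) else 0)
        = x + ((k-1 : ℕ) : ℝ) * y := by
      intro i
      rw [Finset.sum_comm]
      have h4 : ∀ j : Fin k, ∑ G ∈ U, (if G ∈ A i ∩ A j then (1:ℝ) else 0)
          = ((A i ∩ A j).card : ℝ) := by
        intro j
        rw [Finset.sum_boole, Finset.filter_mem_eq_inter,
          Finset.inter_eq_right.2 ((Finset.inter_subset_left).trans (hAsub i))]
      rw [Finset.sum_congr rfl (fun j _ => h4 j),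
        ← Finset.add_sum_erase Finset.univ _ (Finset.mem_univ i)]
      have h5 : ∑ j ∈ Finset.univ.erase i, ((A i ∩ A j).card : ℝ)
          = ((k-1 : ℕ) : ℝ) * y := by
        rw [Finset.sum_congr rfl (fun j hj => by
          rw [hy i j (Ne.symm (Finset.mem_erase.1 hj).1), ← hydef]),
          Finset.sum_const, Finset.card_erase_of_mem (Finset.mem_univ i),
          Finset.card_univ, Fintype.card_fin, nsmul_eq_mul]
      rw [h5, Finset.inter_self, hx i, ← hxdef]
    rw [Finset.sum_congr rfl (fun i _ => h3 i), Finset.sum_const, Finset.card_univ,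
      Fintype.card_fin, nsmul_eq_mul]
    ring
  have key : (k : ℝ) * x - k * ((k-1 : ℕ) : ℝ) * y ≤ (U.card : ℝ) := by
    have step : ∑ G ∈ U, (2 * (∑ i, if G ∈ A i then (1:ℝ) else 0)
        - (∑ i, if G ∈ A i then (1:ℝ) else 0)^2) ≤ ∑ G ∈ U, (1:ℝ) := by
      refine Finset.sum_le_sum fun G _ => ?_
      nlinarith [sq_nonneg ((∑ i, if G ∈ A i then (1:ℝ) else 0) - 1)]
    have lhs_eq : ∑ G ∈ U, (2 * (∑ i, if G ∈ A i then (1:ℝ) else 0)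
        - (∑ i, if G ∈ A i then (1:ℝ) else 0)^2)
        = (k : ℝ) * x - k * ((k-1 : ℕ) : ℝ) * y := by
      rw [Finset.sum_sub_distrib, ← Finset.mul_sum, hsum1, hsum2]
      ring
    calc (k : ℝ) * x - k * ((k-1 : ℕ) : ℝ) * y
        = _ := lhs_eq.symm
      _ ≤ ∑ G ∈ U, (1:ℝ) := step
      _ = (U.card : ℝ) := by simp
  -- assembly
  have hfact : (0:ℝ) < (n.factorial : ℝ) := by positivity
  have hCpos : (0:ℝ) < ((k.choose 2).choose n : ℝ) := by
    exact_mod_cast Nat.pos_of_ne_zero hC0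
  rw [ge_iff_le, PU, hN]
  have hnum : (k : ℝ) * x - k * ((k-1 : ℕ) : ℝ) * y
      ≤ (Nat.card {G : Ens k n // ¬ (toGraph G.1).Connected} : ℝ) := by
    refine key.trans ?_
    exact_mod_cast hcount
  have hrw : ∀ m : ℕ, ((m.descFactorial n : ℕ) : ℝ)
      = (n.factorial : ℝ) * ((m.choose n : ℕ) : ℝ) := by
    intro m
    rw [Nat.descFactorial_eq_factorial_mul_choose]
    push_cast
    ring
  have hdenom : (0:ℝ) < (((k.choose 2).descFactorial n : ℕ) : ℝ) := by
    rw [hrw]; positivity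
  rw [div_le_div_iff₀ hCpos hdenom]
  calc (k : ℝ) * ((((k-1).choose 2).choose n : ℝ)
        - ((k-1 : ℕ) : ℝ) * (((k-2).choose 2).choose n : ℝ))
        * (((k.choose 2).descFactorial n : ℕ) : ℝ)
      = ((k : ℝ) * x - k * ((k-1 : ℕ) : ℝ) * y) * (((k.choose 2).choose n : ℕ) : ℝ) := by
        rw [hxdef, hydef, hrw, hrw, hrw]; ring
    _ ≤ (Nat.card {G : Ens k n // ¬ (toGraph G.1).Connected} : ℝ)
        * (((k.choose 2).choose n : ℕ) : ℝ) := by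
        apply mul_le_mul_of_nonneg_right hnum (le_of_lt hCpos)
end
end

section
/- The number of graphs in G_{k,n} having at least one isolated vertex is at least n! k ( C(C(k-1,2), n) - (k-1) C(C(k-2,2), n) ). -/
open scoped Classical

noncomputable section

lemma bonf {ι α : Type*} [DecidableEq α] [DecidableEq ι] (A : ι → Finset α) (s : Finset ι) :
    (∑ i ∈ s, ((A i).card : ℤ)) - ∑ i ∈ s, ∑ j ∈ s.erase i, ((A i ∩ A j).card : ℤ)
      ≤ ((s.biUnion A).card : ℤ) := by
  induction s using Finset.induction_on with
  | empty => simp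
  | @insert a s ha ih =>
    rw [Finset.biUnion_insert]
    have key1 : ((A a ∪ s.biUnion A).card : ℤ)
        = (A a).card + ((s.biUnion A).card : ℤ) - ((A a ∩ s.biUnion A).card : ℤ) := by
      have := Finset.card_union_add_card_inter (A a) (s.biUnion A)
      omega
    have key2 : ((A a ∩ s.biUnion A).card : ℤ) ≤ ∑ j ∈ s, ((A a ∩ A j).card : ℤ) := by
      rw [Finset.inter_biUnion]
      exact_mod_cast Nat.cast_le.2 (Finset.card_biUnion_le)
    have S2 : ∑ i ∈ insert a s, ∑ j ∈ (insert a s).erase i, ((A i ∩ A j).card : ℤ)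
        = (∑ j ∈ s, ((A a ∩ A j).card : ℤ))
          + ∑ i ∈ s, (((A i ∩ A a).card : ℤ) + ∑ j ∈ s.erase i, ((A i ∩ A j).card : ℤ)) := by
      rw [Finset.sum_insert ha, Finset.erase_insert ha]
      congr 1
      refine Finset.sum_congr rfl fun i hi => ?_
      rw [Finset.erase_insert_of_ne (ne_of_mem_of_not_mem hi ha).symm,
        Finset.sum_insert (fun h => ha (Finset.mem_of_mem_erase h))]
    rw [Finset.sum_insert ha, S2, Finset.sum_add_distrib]
    have pos : (0:ℤ) ≤ ∑ i ∈ s, ((A i ∩ A a).card : ℤ) :=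
      Finset.sum_nonneg fun i _ => by positivity
    linarith

lemma card_sym2_avoid {α : Type*} [Fintype α] (P : α → Prop) :
    Fintype.card {p : Sym2 α // ¬p.IsDiag ∧ ∀ x ∈ p, P x}
      = (Fintype.card {x // P x}).choose 2 := by
  rw [← Sym2.card_subtype_not_diag]
  refine (Fintype.card_congr ?_).symm
  refine Equiv.ofBijective
    (fun q => ⟨q.1.map Subtype.val,
      fun h => q.2 ((Sym2.isDiag_map Subtype.val_injective).1 h),
      fun x hx => by
        obtain ⟨y, _, rfl⟩ := Sym2.mem_map.1 hx
        exact y.2⟩) ⟨?_, ?_⟩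
  · intro q q' h
    exact Subtype.ext (Sym2.map.injective Subtype.val_injective (congrArg Subtype.val h))
  · rintro ⟨p, hd, hP⟩
    induction p using Sym2.ind with
    | _ a b =>
      refine ⟨⟨s(⟨a, hP a (by simp)⟩, ⟨b, hP b (by simp)⟩), fun h => hd ?_⟩, rfl⟩
      rw [Sym2.mk_isDiag_iff] at h ⊢
      exact congrArg Subtype.val h

lemma card_graphs_avoid {k n : ℕ} (P : Fin k → Prop) :
    Fintype.card {e : Fin n → Sym2 (Fin k) // IsGraph e ∧ ∀ j, ∀ x ∈ e j, P x}
      = ((Fintype.card {x // P x}).choose 2).descFactorial n := by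
  have h1 : Fintype.card {e : Fin n → Sym2 (Fin k) // IsGraph e ∧ ∀ j, ∀ x ∈ e j, P x}
      = Fintype.card (Fin n ↪ {p : Sym2 (Fin k) // ¬p.IsDiag ∧ ∀ x ∈ p, P x}) := by
    refine Fintype.card_congr (Equiv.ofBijective
      (fun e => ⟨fun j => (⟨e.1 j, e.2.1.2 j, fun x hx => e.2.2 j x hx⟩ :
          {p : Sym2 (Fin k) // ¬p.IsDiag ∧ ∀ x ∈ p, P x}),
        fun j j' h => e.2.1.1 (congrArg Subtype.val h)⟩) ⟨?_, ?_⟩)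
    · intro e e' h
      refine Subtype.ext (funext fun j => ?_)
      exact congrArg Subtype.val (congrFun (congrArg (fun (f : Fin n ↪ _) => f.toFun) h) j)
    · rintro ⟨f, hf⟩
      refine ⟨⟨fun j => (f j).1, ⟨fun j j' h => hf (Subtype.ext h), fun j => (f j).2.1⟩,
        fun j x hx => (f j).2.2 x hx⟩, rfl⟩
  rw [h1, Fintype.card_embedding_eq, Fintype.card_fin]
  congr 1
  convert card_sym2_avoid P using 2

theorem stmt13 (k n : ℕ) (hk : 2 ≤ k) :
    (Nat.card {e : Fin n → Sym2 (Fin k) // IsGraph e ∧ ∃ i, ∀ j, i ∉ e j} : ℤ)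
      ≥ (n.factorial : ℤ) * k * ((((k - 1).choose 2).choose n : ℤ)
          - ((k - 1 : ℕ) : ℤ) * (((k - 2).choose 2).choose n : ℤ)) := by
  have h1 : ((k - 1 : ℕ) : ℤ) = (k : ℤ) - 1 := by omega
  set B : Fin k → Finset (Fin n → Sym2 (Fin k)) :=
    fun i => Finset.univ.filter (fun e => IsGraph e ∧ ∀ j, i ∉ e j) with hBdef
  have hU : (Nat.card {e : Fin n → Sym2 (Fin k) // IsGraph e ∧ ∃ i, ∀ j, i ∉ e j})
      = ((Finset.univ : Finset (Fin k)).biUnion B).card := by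
    rw [Nat.card_eq_fintype_card, Fintype.card_subtype]
    congr 1
    ext e
    simp only [hBdef, Finset.mem_biUnion, Finset.mem_filter, Finset.mem_univ, true_and]
    tauto
  -- cardinality of a single B i
  have hone : ∀ i : Fin k, Fintype.card {x : Fin k // x ≠ i} = k - 1 := by
    intro i
    have := Fintype.card_subtype_compl (fun x : Fin k => x = i)
    simpa [Fintype.card_subtype_eq] using this
  have htwo : ∀ i j : Fin k, j ≠ i → Fintype.card {x : Fin k // x ≠ i ∧ x ≠ j} = k - 2 := by
    intro i j hij
    rw [Fintype.card_subtype]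
    have : (Finset.univ.filter fun x : Fin k => x ≠ i ∧ x ≠ j)
        = ({i, j} : Finset (Fin k))ᶜ := by
      ext x
      simp [not_or]
    rw [this, Finset.card_compl, Finset.card_pair (Ne.symm hij), Fintype.card_fin]
  have hB : ∀ i : Fin k, (B i).card = ((k - 1).choose 2).descFactorial n := by
    intro i
    have hset : B i = Finset.univ.filter
        (fun e => IsGraph e ∧ ∀ j, ∀ x ∈ e j, x ≠ i) := by
      ext e
      simp only [hBdef, Finset.mem_filter, Finset.mem_univ, true_and]
      constructor
      · rintro ⟨hg, h⟩
        exact ⟨hg, fun j x hx hxi => h j (hxi ▸ hx)⟩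
      · rintro ⟨hg, h⟩
        exact ⟨hg, fun j hi => h j i hi rfl⟩
    rw [hset, ← Fintype.card_subtype]
    calc Fintype.card {e : Fin n → Sym2 (Fin k) // IsGraph e ∧ ∀ j, ∀ x ∈ e j, x ≠ i}
        = ((Fintype.card {x : Fin k // x ≠ i}).choose 2).descFactorial n := by
          convert card_graphs_avoid (fun x : Fin k => x ≠ i) using 2 <;> congr!
      _ = ((k - 1).choose 2).descFactorial n := by rw [hone i]
  have hBB : ∀ i j : Fin k, j ≠ i →
      (B i ∩ B j).card = ((k - 2).choose 2).descFactorial n := by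
    intro i j hij
    have hset : B i ∩ B j = Finset.univ.filter
        (fun e => IsGraph e ∧ ∀ j', ∀ x ∈ e j', x ≠ i ∧ x ≠ j) := by
      ext e
      simp only [hBdef, Finset.mem_inter, Finset.mem_filter, Finset.mem_univ, true_and]
      constructor
      · rintro ⟨⟨hg, h1⟩, _, h2⟩
        exact ⟨hg, fun j' x hx => ⟨fun hxi => h1 j' (hxi ▸ hx), fun hxj => h2 j' (hxj ▸ hx)⟩⟩
      · rintro ⟨hg, h⟩
        exact ⟨⟨hg, fun j' hi => (h j' i hi).1 rfl⟩, hg, fun j' hj => (h j' j hj).2 rfl⟩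
    rw [hset, ← Fintype.card_subtype]
    calc Fintype.card {e : Fin n → Sym2 (Fin k) // IsGraph e ∧ ∀ j', ∀ x ∈ e j', x ≠ i ∧ x ≠ j}
        = ((Fintype.card {x : Fin k // x ≠ i ∧ x ≠ j}).choose 2).descFactorial n := by
          convert card_graphs_avoid (fun x : Fin k => x ≠ i ∧ x ≠ j) using 2 <;> congr!
      _ = ((k - 2).choose 2).descFactorial n := by rw [htwo i j hij]
  have hbonf := bonf B (Finset.univ : Finset (Fin k))
  have hsum1 : ∑ i : Fin k, ((B i).card : ℤ)
      = (k : ℤ) * (((k - 1).choose 2).descFactorial n : ℤ) := by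
    simp only [hB]
    rw [Finset.sum_const, Finset.card_univ, Fintype.card_fin, nsmul_eq_mul]
  have hinner : ∀ i : Fin k, ∑ j ∈ Finset.univ.erase i, ((B i ∩ B j).card : ℤ)
      = ((k : ℤ) - 1) * (((k - 2).choose 2).descFactorial n : ℤ) := by
    intro i
    have e1 : ∑ j ∈ Finset.univ.erase i, ((B i ∩ B j).card : ℤ)
        = ∑ _j ∈ Finset.univ.erase i, ((((k - 2).choose 2).descFactorial n : ℕ) : ℤ) :=
      Finset.sum_congr rfl fun j hj => by rw [hBB i j (Finset.ne_of_mem_erase hj)]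
    rw [e1]
    rw [Finset.sum_const]
    rw [Finset.card_erase_of_mem (Finset.mem_univ i)]
    rw [Finset.card_univ]
    rw [Fintype.card_fin]
    rw [nsmul_eq_mul]
    rw [h1]
  have hsum2 : ∑ i : Fin k, ∑ j ∈ Finset.univ.erase i, ((B i ∩ B j).card : ℤ)
      = (k : ℤ) * (((k : ℤ) - 1) * (((k - 2).choose 2).descFactorial n : ℤ)) := by
    have e2 : (∑ i : Fin k, ∑ j ∈ Finset.univ.erase i, ((B i ∩ B j).card : ℤ))
        = ∑ _i : Fin k, ((k : ℤ) - 1) * (((k - 2).choose 2).descFactorial n : ℤ) :=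
      Finset.sum_congr rfl fun i _ => hinner i
    rw [e2]
    rw [Finset.sum_const]
    rw [Finset.card_univ]
    rw [Fintype.card_fin]
    rw [nsmul_eq_mul]
  have hrhs : (∑ i : Fin k, ((B i).card : ℤ))
        - ∑ i : Fin k, ∑ j ∈ Finset.univ.erase i, ((B i ∩ B j).card : ℤ)
      = (n.factorial : ℤ) * k * ((((k - 1).choose 2).choose n : ℤ)
          - ((k - 1 : ℕ) : ℤ) * (((k - 2).choose 2).choose n : ℤ)) := by
    rw [hsum1, hsum2, Nat.descFactorial_eq_factorial_mul_choose,
      Nat.descFactorial_eq_factorial_mul_choose]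
    push_cast [h1]
    ring
  rw [hU, ge_iff_le, ← hrhs]
  exact hbonf
end
end

section
/- For the uniform ensemble G_{k,n} with edge failure probability ε ∈ (0,1), E[P_f(G,ε)] ≤ (1/(2 C(C(k,2),n))) Σ_{v=1}^{n} Σ_{u=0}^{k} C(k,u) C(u(k-u),v) C(C(k,2)-u(k-u), n-v) ε^v + (1/(2 C(C(k,2),n))) Σ_{u=0}^{k} C(k,u) C(C(k,2)-u(k-u), n) - 1. -/
open scoped Classical

noncomputable section

namespace Stmt18Aux

lemma exists_rep_of_not_isDiag {α : Type*} {s : Sym2 α} (hs : ¬ s.IsDiag) :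
    ∃ a b, a ≠ b ∧ s = s(a, b) := by
  induction s using Sym2.ind with
  | _ a b => exact ⟨a, b, by simpa using hs, rfl⟩

lemma vecMul_apply {k n : ℕ} (e : Fin n → Sym2 (Fin k)) (m : Fin k → ZMod 2) {j : Fin n}
    {a b : Fin k} (hab : a ≠ b) (hej : e j = s(a, b)) :
    Matrix.vecMul m (inc e) j = m a + m b := by
  classical
  simp only [Matrix.vecMul, dotProduct, inc, Matrix.of_apply, hej, mul_ite, mul_one,
    mul_zero]
  rw [← Finset.sum_filter]
  have h : (Finset.univ.filter (· ∈ s(a, b))) = ({a, b} : Finset (Fin k)) := by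
    ext i; simp [Sym2.mem_iff]
  rw [h, Finset.sum_pair hab]

lemma vecMul_one {k n : ℕ} (e : Fin n → Sym2 (Fin k)) (he2 : ∀ j, ¬ (e j).IsDiag) :
    Matrix.vecMul (1 : Fin k → ZMod 2) (inc e) = 0 := by
  funext j
  obtain ⟨a, b, hab, hej⟩ := exists_rep_of_not_isDiag (he2 j)
  rw [vecMul_apply e _ hab hej]
  simp only [Pi.one_apply, Pi.zero_apply]
  decide

lemma sum_if_subset (n : ℕ) (C : Finset (Fin n)) (ε : ℝ) :
    ∑ E' : Finset (Fin n), (if C ⊆ E' then ε ^ E'.card * (1 - ε) ^ (n - E'.card) else 0)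
      = ε ^ C.card := by
  classical
  have hCc : Cᶜ.card = n - C.card := by
    rw [Finset.card_compl, Fintype.card_fin]
  have h2 : ∑ D ∈ Cᶜ.powerset, ε ^ C.card * (ε ^ D.card * (1 - ε) ^ (Cᶜ \ D).card)
      = ε ^ C.card := by
    rw [← Finset.mul_sum]
    have hpa := Finset.prod_add (fun _ : Fin n => ε) (fun _ : Fin n => 1 - ε) Cᶜ
    simp only [Finset.prod_const] at hpa
    rw [← hpa]
    norm_num
  rw [← Finset.sum_filter, ← h2]
  refine Finset.sum_nbij' (fun E' => E' \ C) (fun D => C ∪ D) ?_ ?_ ?_ ?_ ?_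
  · intro E' hE'
    rw [Finset.mem_filter] at hE'
    rw [Finset.mem_powerset]
    intro x hx
    rw [Finset.mem_sdiff] at hx
    exact Finset.mem_compl.2 hx.2
  · intro D hD
    exact Finset.mem_filter.2 ⟨Finset.mem_univ _, Finset.subset_union_left⟩
  · intro E' hE'
    exact Finset.union_sdiff_of_subset (Finset.mem_filter.1 hE').2
  · intro D hD
    rw [Finset.mem_powerset] at hD
    have hdisj : Disjoint C D := by
      rw [Finset.disjoint_left]
      intro x hxC hxD
      exact (Finset.mem_compl.1 (hD hxD)) hxC
    show (C ∪ D) \ C = D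
    exact Finset.union_sdiff_cancel_left hdisj
  · intro E' hE'
    have hsub := (Finset.mem_filter.1 hE').2
    have hc1 : C.card ≤ E'.card := Finset.card_le_card hsub
    have hc2 : E'.card ≤ n := by
      have := Finset.card_le_univ E'
      simpa using this
    have hcard1 : (E' \ C).card = E'.card - C.card := Finset.card_sdiff_of_subset hsub
    have hsubc : E' \ C ⊆ Cᶜ := fun x hx =>
      Finset.mem_compl.2 (Finset.mem_sdiff.1 hx).2
    have hcard2 : (Cᶜ \ (E' \ C)).card = n - E'.card := by
      rw [Finset.card_sdiff_of_subset hsubc, hCc, hcard1]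
      omega
    show ε ^ E'.card * (1 - ε) ^ (n - E'.card) = _
    rw [hcard2, hcard1, ← mul_assoc, ← pow_add]
    congr 2
    omega

/-- Index set of edges on which the cut determined by `m` is supported. -/
def cutIdx {k n : ℕ} (e : Fin n → Sym2 (Fin k)) (m : Fin k → ZMod 2) : Finset (Fin n) :=
  Finset.univ.filter fun j => Matrix.vecMul m (inc e) j ≠ 0

lemma wt_eq_card_cutIdx {k n : ℕ} (e : Fin n → Sym2 (Fin k)) (m : Fin k → ZMod 2) :
    wt (Matrix.vecMul m (inc e)) = (cutIdx e m).card := rfl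

lemma wt_of_kernel {n : ℕ} (x : Fin n → ZMod 2) (h : x = 0) : wt x = 0 := by
  subst h
  simp [wt]

set_option maxHeartbeats 4000000 in
lemma claimA {k n : ℕ} (hk : 2 ≤ k) (e : Fin n → Sym2 (Fin k)) (he : IsGraph e) {ε : ℝ}
    (h0 : 0 < ε) (h1 : ε < 1) :
    PfFull e ε ≤ (∑ m : Fin k → ZMod 2, ε ^ wt (Matrix.vecMul m (inc e))) / 2 - 1 := by
  classical
  have x₀ : Fin k := ⟨0, by omega⟩
  haveI hx0 : Nonempty (Fin k) := ⟨x₀⟩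
  have hrep : ∀ j, ∃ a b, a ≠ b ∧ e j = s(a, b) := fun j =>
    exists_rep_of_not_isDiag (he.2 j)
  have hone := vecMul_one e he.2
  have hnn : ∀ m : Fin k → ZMod 2, (0:ℝ) ≤ ε ^ wt (Matrix.vecMul m (inc e)) := fun m =>
    pow_nonneg h0.le _
  have haddself : ∀ c : ZMod 2, c + c = 0 := by decide
  have hzeromul : Matrix.vecMul (0 : Fin k → ZMod 2) (inc e) = 0 := Matrix.zero_vecMul _
  have hkernel : ∀ (G : SimpleGraph (Fin k)) (x : Fin k) (j : Fin n) (a b : Fin k), a ≠ b →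
      e j = s(a, b) → G.Adj a b →
      Matrix.vecMul (fun z => if G.Reachable x z then (1:ZMod 2) else 0) (inc e) j = 0 := by
    intro G x j a b hab hej hadj
    rw [vecMul_apply e _ hab hej]
    have hiff : G.Reachable x a ↔ G.Reachable x b :=
      ⟨fun h => h.trans hadj.reachable, fun h => h.trans hadj.symm.reachable⟩
    by_cases hr : G.Reachable x a
    · rw [if_pos hr, if_pos (hiff.1 hr)]; exact haddself 1
    · rw [if_neg hr, if_neg (fun h => hr (hiff.2 h))]; exact haddself 0
  have h01 : (0 : Fin k → ZMod 2) ≠ 1 := by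
    intro h
    have := congrFun h x₀
    simp only [Pi.zero_apply, Pi.one_apply] at this
    exact absurd this (by decide)
  by_cases hconn : (toGraph e).Connected
  · -- connected case
    rw [PfFull, if_pos hconn, Pf]
    set M : Finset (Fin k → ZMod 2) := Finset.univ.filter (fun m => m ≠ 0 ∧ m ≠ 1) with hM
    have hsplit : ∑ m : Fin k → ZMod 2, ε ^ wt (Matrix.vecMul m (inc e))
        = (∑ m ∈ M, ε ^ wt (Matrix.vecMul m (inc e))) + 2 := by
      rw [← Finset.sum_filter_add_sum_filter_not Finset.univ (fun m => m ≠ 0 ∧ m ≠ 1)]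
      congr 1
      have hset : Finset.univ.filter (fun m : Fin k → ZMod 2 => ¬(m ≠ 0 ∧ m ≠ 1))
          = {0, 1} := by
        ext m
        simp only [Finset.mem_filter, Finset.mem_univ, true_and, Finset.mem_insert,
          Finset.mem_singleton]
        tauto
      rw [hset, Finset.sum_pair h01, wt_of_kernel _ hzeromul, wt_of_kernel _ hone]
      norm_num
    have hPfbound : (∑ E' : Finset (Fin n),
        if ¬ (survivor e E').Connected then ε ^ E'.card * (1 - ε) ^ (n - E'.card) else 0)
        ≤ (∑ m ∈ M, ε ^ wt (Matrix.vecMul m (inc e))) / 2 := by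
      have hpt : ∀ E' : Finset (Fin n),
          (if ¬ (survivor e E').Connected then ε ^ E'.card * (1 - ε) ^ (n - E'.card) else 0)
          ≤ (∑ m ∈ M, if cutIdx e m ⊆ E' then ε ^ E'.card * (1 - ε) ^ (n - E'.card) else 0) / 2 := by
        intro E'
        set w : ℝ := ε ^ E'.card * (1 - ε) ^ (n - E'.card) with hw
        have hw0 : 0 ≤ w := mul_nonneg (pow_nonneg h0.le _) (pow_nonneg (by linarith) _)
        have hnn' : ∀ m ∈ M, (0:ℝ) ≤ (if cutIdx e m ⊆ E' then w else 0) := by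
          intro m _
          split <;> simp [hw0]
        by_cases hs : (survivor e E').Connected
        · rw [if_neg (not_not_intro hs)]
          exact div_nonneg (Finset.sum_nonneg hnn') (by norm_num)
        · rw [if_pos hs]
          have hpre : ¬ (survivor e E').Preconnected := by
            intro hp
            exact hs ⟨hp⟩
          rw [SimpleGraph.Preconnected] at hpre
          push_neg at hpre
          obtain ⟨x, y, hxy⟩ := hpre
          set m0 : Fin k → ZMod 2 :=
            fun z => if (survivor e E').Reachable x z then 1 else 0 with hm0def
          have hm0x : m0 x = 1 := if_pos (SimpleGraph.Reachable.refl x)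
          have hm0y : m0 y = 0 := if_neg hxy
          have hker : ∀ j, j ∉ E' → Matrix.vecMul m0 (inc e) j = 0 := by
            intro j hj
            obtain ⟨a, b, hab, hej⟩ := hrep j
            have hadj : (survivor e E').Adj a b := by
              rw [survivor, SimpleGraph.fromEdgeSet_adj]
              exact ⟨⟨j, hj, hej⟩, hab⟩
            exact hkernel _ x j a b hab hej hadj
          have hcut0 : cutIdx e m0 ⊆ E' := by
            intro j hjc
            by_contra hj
            exact (Finset.mem_filter.1 hjc).2 (hker j hj)
          have hvm1 : Matrix.vecMul (m0 + 1) (inc e) = Matrix.vecMul m0 (inc e) := by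
            rw [Matrix.add_vecMul, hone, add_zero]
          have hcut1 : cutIdx e (m0 + 1) = cutIdx e m0 := by
            unfold cutIdx
            rw [hvm1]
          have hm0M : m0 ∈ M := by
            refine Finset.mem_filter.2 ⟨Finset.mem_univ _, ?_, ?_⟩
            · intro h
              have := congrFun h x
              rw [hm0x] at this
              simp only [Pi.zero_apply] at this
              exact absurd this (by decide)
            · intro h
              have := congrFun h y
              rw [hm0y] at this
              simp only [Pi.one_apply] at this
              exact absurd this (by decide)
          have hm1M : m0 + 1 ∈ M := by
            refine Finset.mem_filter.2 ⟨Finset.mem_univ _, ?_, ?_⟩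
            · intro h
              have := congrFun h y
              simp only [Pi.add_apply, Pi.one_apply, Pi.zero_apply, hm0y] at this
              exact absurd this (by decide)
            · intro h
              have := congrFun h x
              simp only [Pi.add_apply, Pi.one_apply, hm0x] at this
              exact absurd this (by decide)
          have hne : m0 ≠ m0 + 1 := by
            intro h
            have := congrFun h x
            simp only [Pi.add_apply, Pi.one_apply, hm0x] at this
            exact absurd this (by decide)
          have hsum2 : w + w ≤ ∑ m ∈ M, (if cutIdx e m ⊆ E' then w else 0) := by
            have hss : ({m0, m0 + 1} : Finset (Fin k → ZMod 2)) ⊆ M := by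
              intro m hm
              rcases Finset.mem_insert.1 hm with rfl | hm
              · exact hm0M
              · rw [Finset.mem_singleton.1 hm]
                exact hm1M
            have hmono := Finset.sum_le_sum_of_subset_of_nonneg hss
              (fun m hm _ => hnn' m hm)
            refine le_trans (le_of_eq ?_) hmono
            rw [Finset.sum_pair hne, if_pos hcut0, if_pos (hcut1 ▸ hcut0)]
          linarith
      calc (∑ E' : Finset (Fin n),
          if ¬ (survivor e E').Connected then ε ^ E'.card * (1 - ε) ^ (n - E'.card) else 0)
          ≤ ∑ E' : Finset (Fin n), (∑ m ∈ M,
              if cutIdx e m ⊆ E' then ε ^ E'.card * (1 - ε) ^ (n - E'.card) else 0) / 2 :=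
            Finset.sum_le_sum (fun E' _ => hpt E')
        _ = (∑ m ∈ M, ∑ E' : Finset (Fin n),
              if cutIdx e m ⊆ E' then ε ^ E'.card * (1 - ε) ^ (n - E'.card) else 0) / 2 := by
            rw [← Finset.sum_div]
            congr 1
            exact Finset.sum_comm
        _ = (∑ m ∈ M, ε ^ wt (Matrix.vecMul m (inc e))) / 2 := by
            congr 1
            refine Finset.sum_congr rfl (fun m _ => ?_)
            rw [sum_if_subset n (cutIdx e m) ε, wt_eq_card_cutIdx]
    rw [hsplit]
    linarith
  · -- unconnected case
    rw [PfFull, if_neg hconn]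
    have hpre : ¬ (toGraph e).Preconnected := by
      intro hp
      exact hconn ⟨hp⟩
    rw [SimpleGraph.Preconnected] at hpre
    push_neg at hpre
    obtain ⟨x, y, hxy⟩ := hpre
    set m0 : Fin k → ZMod 2 := fun z => if (toGraph e).Reachable x z then 1 else 0 with hm0def
    have hm0x : m0 x = 1 := if_pos (SimpleGraph.Reachable.refl x)
    have hm0y : m0 y = 0 := if_neg hxy
    have hker0 : Matrix.vecMul m0 (inc e) = 0 := by
      funext j
      obtain ⟨a, b, hab, hej⟩ := hrep j
      have hadj : (toGraph e).Adj a b := by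
        rw [toGraph, SimpleGraph.fromEdgeSet_adj]
        exact ⟨⟨j, hej⟩, hab⟩
      simpa using hkernel _ x j a b hab hej hadj
    have hker1 : Matrix.vecMul (m0 + 1) (inc e) = 0 := by
      rw [Matrix.add_vecMul, hone, hker0, add_zero]
    have hne1 : (0 : Fin k → ZMod 2) ≠ m0 := by
      intro h
      have := congrFun h x
      rw [hm0x] at this
      exact absurd this (by simp)
    have hne2 : (0 : Fin k → ZMod 2) ≠ m0 + 1 := by
      intro h
      have := congrFun h y
      simp only [Pi.zero_apply, Pi.add_apply, Pi.one_apply, hm0y] at this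
      exact absurd this (by decide)
    have hne3 : (1 : Fin k → ZMod 2) ≠ m0 := by
      intro h
      have := congrFun h y
      rw [hm0y] at this
      exact absurd this (by simp)
    have hne4 : (1 : Fin k → ZMod 2) ≠ m0 + 1 := by
      intro h
      have := congrFun h x
      simp only [Pi.one_apply, Pi.add_apply, hm0x] at this
      exact absurd this (by decide)
    have hne5 : m0 ≠ m0 + 1 := by
      intro h
      have := congrFun h x
      simp only [Pi.add_apply, Pi.one_apply, hm0x] at this
      exact absurd this (by decide)
    have key : (4:ℝ) ≤ ∑ m : Fin k → ZMod 2, ε ^ wt (Matrix.vecMul m (inc e)) := by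
      have hmono := Finset.sum_le_sum_of_subset_of_nonneg
        (Finset.subset_univ ({0, 1, m0, m0 + 1} : Finset (Fin k → ZMod 2)))
        (fun m _ _ => hnn m)
      refine le_trans (le_of_eq ?_) hmono
      rw [Finset.sum_insert (by simp [h01, hne1, hne2]),
        Finset.sum_insert (by simp [hne3, hne4]),
        Finset.sum_insert (by simp [hne5]), Finset.sum_singleton]
      rw [wt_of_kernel _ hzeromul, wt_of_kernel _ hone, wt_of_kernel _ hker0,
        wt_of_kernel _ hker1]
      norm_num
    linarith

end Stmt18Aux

namespace Stmt18Aux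

/-- The finset of non-diagonal pairs. -/
def PND (k : ℕ) : Finset (Sym2 (Fin k)) := Finset.univ.filter fun s => ¬ s.IsDiag

/-- The edge set of a member of the ensemble, as a finset. -/
def rangeF {k n : ℕ} (G : Ens k n) : Finset (Sym2 (Fin k)) :=
  Finset.univ.map ⟨G.1, G.2.1⟩

lemma PND_card (k : ℕ) : (PND k).card = k.choose 2 := by
  rw [PND, ← Fintype.card_subtype, Sym2.card_subtype_not_diag, Fintype.card_fin]

lemma rangeF_mem {k n : ℕ} (G : Ens k n) : rangeF G ∈ (PND k).powersetCard n := by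
  rw [Finset.mem_powersetCard]
  constructor
  · intro s hs
    rw [rangeF, Finset.mem_map] at hs
    obtain ⟨j, _, hj⟩ := hs
    simp only [Function.Embedding.coeFn_mk] at hj
    rw [PND, Finset.mem_filter]
    exact ⟨Finset.mem_univ _, hj ▸ G.2.2 j⟩
  · rw [rangeF, Finset.card_map, Finset.card_univ, Fintype.card_fin]

lemma mem_rangeF {k n : ℕ} (G : Ens k n) (j : Fin n) : G.1 j ∈ rangeF G :=
  Finset.mem_map_of_mem _ (Finset.mem_univ j)

lemma fiber_card {k n : ℕ} (S : Finset (Sym2 (Fin k))) (hS : S ∈ (PND k).powersetCard n) :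
    (Finset.univ.filter fun G : Ens k n => rangeF G = S).card = n.factorial := by
  classical
  obtain ⟨hsub, hcard⟩ := Finset.mem_powersetCard.1 hS
  have hcard' : Fintype.card {x // x ∈ S} = n := by
    rw [Fintype.card_coe, hcard]
  have equivE : {G : Ens k n // rangeF G = S} ≃ (Fin n ≃ {x // x ∈ S}) :=
    { toFun := fun p =>
        Equiv.ofBijective
          (fun j => (⟨p.1.1 j, by have h := mem_rangeF p.1 j; rwa [p.2] at h⟩ : {x // x ∈ S}))
          (by
            rw [Fintype.bijective_iff_injective_and_card]
            exact ⟨fun j1 j2 h => p.1.2.1 (congrArg Subtype.val h), by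
              rw [hcard', Fintype.card_fin]⟩)
      invFun := fun q =>
        ⟨⟨fun j => (q j).1,
          ⟨fun j1 j2 h => q.injective (Subtype.ext h),
           fun j => (Finset.mem_filter.1 (hsub (q j).2)).2⟩⟩, by
          unfold rangeF
          ext s
          simp only [Finset.mem_map, Finset.mem_univ, true_and, Function.Embedding.coeFn_mk]
          constructor
          · rintro ⟨j, rfl⟩
            exact (q j).2
          · intro hsS
            exact ⟨q.symm ⟨s, hsS⟩, by simp⟩⟩
      left_inv := fun p => by
        apply Subtype.ext
        apply Subtype.ext
        rfl
      right_inv := fun q => by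
        ext j
        rfl }
  have h1 : (Finset.univ.filter fun G : Ens k n => rangeF G = S).card
      = Fintype.card {G : Ens k n // rangeF G = S} := (Fintype.card_subtype _).symm
  rw [h1, Fintype.card_congr equivE,
    Fintype.card_equiv (Fintype.equivOfCardEq (by rw [hcard', Fintype.card_fin])),
    Fintype.card_fin]

lemma sum_ens {k n : ℕ} (φ : Finset (Sym2 (Fin k)) → ℝ) :
    ∑ G : Ens k n, φ (rangeF G)
      = ∑ S ∈ (PND k).powersetCard n, (n.factorial : ℝ) * φ S := by
  classical
  rw [← Finset.sum_fiberwise_of_maps_to' (fun G _ => rangeF_mem G) φ]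
  refine Finset.sum_congr rfl (fun S hS => ?_)
  rw [Finset.sum_const, fiber_card S hS, nsmul_eq_mul]

lemma sum_inter_card {β : Type*} [Fintype β] [DecidableEq β] (U A : Finset β) (hA : A ⊆ U)
    (N : ℕ) (f : ℕ → ℝ) :
    ∑ S ∈ U.powersetCard N, f (S ∩ A).card
      = ∑ v ∈ Finset.range (N + 1),
          ((A.card.choose v * (U \ A).card.choose (N - v) : ℕ) : ℝ) * f v := by
  classical
  have hmaps : ∀ S ∈ U.powersetCard N, (S ∩ A).card ∈ Finset.range (N + 1) := by
    intro S hS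
    rw [Finset.mem_range]
    have h1 := Finset.card_le_card (Finset.inter_subset_left (s₂ := A) (s₁ := S))
    have h2 := (Finset.mem_powersetCard.1 hS).2
    omega
  rw [← Finset.sum_fiberwise_of_maps_to' hmaps f]
  refine Finset.sum_congr rfl (fun v hv => ?_)
  have hv' : v ≤ N := by
    rw [Finset.mem_range] at hv
    omega
  have hcardeq : ((U.powersetCard N).filter fun S => (S ∩ A).card = v).card
      = A.card.choose v * (U \ A).card.choose (N - v) := by
    have hbij : ((U.powersetCard N).filter fun S => (S ∩ A).card = v).card
        = (A.powersetCard v ×ˢ (U \ A).powersetCard (N - v)).card := by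
      refine Finset.card_nbij' (fun S => (S ∩ A, S \ A)) (fun p => p.1 ∪ p.2) ?_ ?_ ?_ ?_
      · intro S hS
        obtain ⟨hSmem, hSv⟩ := Finset.mem_filter.1 hS
        obtain ⟨hsub, hScard⟩ := Finset.mem_powersetCard.1 hSmem
        refine Finset.mem_product.2
          ⟨Finset.mem_powersetCard.2 ⟨Finset.inter_subset_right, hSv⟩,
          Finset.mem_powersetCard.2 ⟨?_, ?_⟩⟩
        · intro x hx
          rw [Finset.mem_sdiff] at hx ⊢
          exact ⟨hsub hx.1, hx.2⟩
        · show (S \ A).card = N - v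
          rw [← Finset.sdiff_inter_self_left, Finset.card_sdiff_of_subset Finset.inter_subset_left,
            hScard, hSv]
      · intro p hp
        rw [Finset.mem_coe, Finset.mem_product] at hp
        obtain ⟨h1sub, h1c⟩ := Finset.mem_powersetCard.1 hp.1
        obtain ⟨h2sub, h2c⟩ := Finset.mem_powersetCard.1 hp.2
        have hdisj : Disjoint p.1 p.2 := by
          rw [Finset.disjoint_left]
          intro x hx1 hx2
          exact (Finset.mem_sdiff.1 (h2sub hx2)).2 (h1sub hx1)
        have hint : (p.1 ∪ p.2) ∩ A = p.1 := by
          ext x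
          rw [Finset.mem_inter, Finset.mem_union]
          constructor
          · rintro ⟨h | h, hA'⟩
            · exact h
            · exact absurd hA' (Finset.mem_sdiff.1 (h2sub h)).2
          · intro h
            exact ⟨Or.inl h, h1sub h⟩
        show p.1 ∪ p.2 ∈ Finset.filter _ _
        refine Finset.mem_filter.2 ⟨Finset.mem_powersetCard.2 ⟨?_, ?_⟩, by rw [hint, h1c]⟩
        · intro x hx
          rcases Finset.mem_union.1 hx with h | h
          · exact hA (h1sub h)
          · exact (Finset.mem_sdiff.1 (h2sub h)).1
        · rw [Finset.card_union_of_disjoint hdisj, h1c, h2c]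
          omega
      · intro S hS
        show (S ∩ A) ∪ (S \ A) = S
        ext x
        simp only [Finset.mem_union, Finset.mem_inter, Finset.mem_sdiff]
        tauto
      · intro p hp
        rw [Finset.mem_coe, Finset.mem_product] at hp
        obtain ⟨h1sub, h1c⟩ := Finset.mem_powersetCard.1 hp.1
        obtain ⟨h2sub, h2c⟩ := Finset.mem_powersetCard.1 hp.2
        have hint : (p.1 ∪ p.2) ∩ A = p.1 := by
          ext x
          rw [Finset.mem_inter, Finset.mem_union]
          constructor
          · rintro ⟨h | h, hA'⟩
            · exact h
            · exact absurd hA' (Finset.mem_sdiff.1 (h2sub h)).2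
          · intro h
            exact ⟨Or.inl h, h1sub h⟩
        have hsd : (p.1 ∪ p.2) \ A = p.2 := by
          ext x
          rw [Finset.mem_sdiff, Finset.mem_union]
          constructor
          · rintro ⟨h | h, hA'⟩
            · exact absurd (h1sub h) hA'
            · exact h
          · intro h
            exact ⟨Or.inr h, (Finset.mem_sdiff.1 (h2sub h)).2⟩
        show ((p.1 ∪ p.2) ∩ A, (p.1 ∪ p.2) \ A) = p
        rw [hint, hsd]
    rw [hbij, Finset.card_product, Finset.card_powersetCard, Finset.card_powersetCard]
  rw [Finset.sum_const, nsmul_eq_mul, hcardeq]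

end Stmt18Aux

namespace Stmt18Aux

/-- Support of a binary vector. -/
def V1set {k : ℕ} (m : Fin k → ZMod 2) : Finset (Fin k) :=
  Finset.univ.filter fun i => m i ≠ 0

/-- Crossing pairs of a cut. -/
def Across {k : ℕ} (V1 : Finset (Fin k)) : Finset (Sym2 (Fin k)) :=
  Finset.univ.filter fun s => crosses V1 s

lemma Across_subset_PND {k : ℕ} (V1 : Finset (Fin k)) : Across V1 ⊆ PND k := by
  intro s hs
  obtain ⟨a, b, hseq, ha, hb⟩ := (Finset.mem_filter.1 hs).2
  refine Finset.mem_filter.2 ⟨Finset.mem_univ _, ?_⟩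
  rw [hseq, Sym2.mk_isDiag_iff]
  intro h
  exact hb (h ▸ ha)

lemma card_Across {k : ℕ} (V1 : Finset (Fin k)) :
    (Across V1).card = V1.card * (k - V1.card) := by
  classical
  have h : (V1 ×ˢ V1ᶜ).card = (Across V1).card := by
    refine Finset.card_bij (fun p _ => s(p.1, p.2)) ?_ ?_ ?_
    · intro p hp
      rw [Finset.mem_product] at hp
      exact Finset.mem_filter.2 ⟨Finset.mem_univ _,
        ⟨p.1, p.2, rfl, hp.1, Finset.mem_compl.1 hp.2⟩⟩
    · intro p hp q hq heq
      rw [Finset.mem_product] at hp hq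
      rw [Sym2.eq_iff] at heq
      rcases heq with ⟨h1, h2⟩ | ⟨h1, h2⟩
      · exact Prod.ext h1 h2
      · exact absurd (h1 ▸ hq.2) (by simpa using hp.1)
    · intro s hs
      obtain ⟨a, b, hseq, ha, hb⟩ := (Finset.mem_filter.1 hs).2
      exact ⟨(a, b), Finset.mem_product.2 ⟨ha, Finset.mem_compl.2 hb⟩, hseq.symm⟩
  rw [← h, Finset.card_product, Finset.card_compl, Fintype.card_fin]

lemma vecMul_ne_iff {k n : ℕ} (e : Fin n → Sym2 (Fin k)) (he2 : ∀ j, ¬ (e j).IsDiag)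
    (m : Fin k → ZMod 2) (j : Fin n) :
    Matrix.vecMul m (inc e) j ≠ 0 ↔ crosses (V1set m) (e j) := by
  obtain ⟨a, b, hab, hej⟩ := exists_rep_of_not_isDiag (he2 j)
  rw [vecMul_apply e m hab hej, hej]
  have hcr : crosses (V1set m) s(a, b) ↔ ((m a ≠ 0 ∧ m b = 0) ∨ (m b ≠ 0 ∧ m a = 0)) := by
    constructor
    · rintro ⟨c, d, hcd, hc, hd⟩
      simp only [V1set, Finset.mem_filter, Finset.mem_univ, true_and, not_not] at hc hd
      rw [Sym2.eq_iff] at hcd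
      rcases hcd with ⟨rfl, rfl⟩ | ⟨rfl, rfl⟩
      · exact Or.inl ⟨hc, hd⟩
      · exact Or.inr ⟨hc, hd⟩
    · rintro (⟨h1, h2⟩ | ⟨h1, h2⟩)
      · exact ⟨a, b, rfl, by simp [V1set, h1], by simp [V1set, h2]⟩
      · exact ⟨b, a, Sym2.eq_swap.symm, by simp [V1set, h1], by simp [V1set, h2]⟩
  rw [hcr]
  generalize m a = c
  generalize m b = d
  revert c d
  decide

lemma wt_eq_inter {k n : ℕ} (G : Ens k n) (m : Fin k → ZMod 2) :
    wt (Matrix.vecMul m (inc G.1)) = ((rangeF G) ∩ Across (V1set m)).card := by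
  classical
  have h1 : (rangeF G) ∩ Across (V1set m)
      = (rangeF G).filter (fun s => crosses (V1set m) s) := by
    ext s
    simp only [Finset.mem_inter, Finset.mem_filter, Across, Finset.mem_univ, true_and]
  rw [h1, rangeF, Finset.filter_map, Finset.card_map]
  rw [wt, Finset.filter_congr (fun j _ => vecMul_ne_iff G.1 G.2.2 m j)]
  rfl

lemma card_wt_eq (k u : ℕ) :
    (Finset.univ.filter fun m : Fin k → ZMod 2 => wt m = u).card = k.choose u := by
  classical
  have hval2 : ∀ c : ZMod 2, c ≠ 0 → (1 : ZMod 2) = c := by decide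
  have h : (Finset.univ.filter fun m : Fin k → ZMod 2 => wt m = u).card
      = ((Finset.univ : Finset (Fin k)).powersetCard u).card := by
    refine Finset.card_nbij' (fun m => V1set m)
      (fun S => fun i => if i ∈ S then 1 else 0) ?_ ?_ ?_ ?_
    · intro m hm
      exact Finset.mem_powersetCard.2 ⟨Finset.subset_univ _, (Finset.mem_filter.1 hm).2⟩
    · intro S hS
      refine Finset.mem_filter.2 ⟨Finset.mem_univ _, ?_⟩
      have hfs : (Finset.univ.filter fun i => (if i ∈ S then (1 : ZMod 2) else 0) ≠ 0) = S := by
        ext i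
        by_cases h : i ∈ S <;> simp [h]
      show (Finset.univ.filter fun i => (if i ∈ S then (1 : ZMod 2) else 0) ≠ 0).card = u
      rw [hfs]
      exact (Finset.mem_powersetCard.1 hS).2
    · intro m hm
      funext i
      show (if i ∈ V1set m then (1 : ZMod 2) else 0) = m i
      by_cases h : m i = 0
      · rw [if_neg (by simp [V1set, h]), h]
      · rw [if_pos (by simp [V1set, h])]
        exact (hval2 (m i) h)
    · intro S hS
      show V1set (fun i => if i ∈ S then (1 : ZMod 2) else 0) = S
      ext i
      by_cases h : i ∈ S <;> simp [V1set, h]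
  rw [h, Finset.card_powersetCard, Finset.card_univ, Fintype.card_fin]

lemma wt_le (k : ℕ) (m : Fin k → ZMod 2) : wt m ≤ k := by
  have := Finset.card_le_univ (Finset.univ.filter fun i => m i ≠ 0)
  simpa [wt] using this

end Stmt18Aux

open Stmt18Aux in
set_option maxHeartbeats 2000000 in
theorem stmt18 (k n : ℕ) (hk : 2 ≤ k) (hn1 : 1 ≤ n) (hn : n ≤ k.choose 2)
    (ε : ℝ) (h0 : 0 < ε) (h1 : ε < 1) :
    (∑ G : Ens k n, PfFull G.1 ε) / Nat.card (Ens k n)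
      ≤ (1 / (2 * ((k.choose 2).choose n : ℝ))) *
          ∑ v ∈ Finset.Icc 1 n, ∑ u ∈ Finset.range (k + 1),
            (k.choose u * (u * (k - u)).choose v
              * (k.choose 2 - u * (k - u)).choose (n - v) : ℝ) * ε ^ v
        + (1 / (2 * ((k.choose 2).choose n : ℝ))) *
            ∑ u ∈ Finset.range (k + 1),
              (k.choose u * (k.choose 2 - u * (k - u)).choose n : ℝ)
        - 1 := by
  classical
  have hfac : (0:ℝ) < (n.factorial : ℝ) := by exact_mod_cast n.factorial_pos
  have hch : (0:ℝ) < ((k.choose 2).choose n : ℝ) := by exact_mod_cast Nat.choose_pos hn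
  -- Step 1: pointwise bound summed over the ensemble
  have hstep1 : ∑ G : Ens k n, PfFull G.1 ε
      ≤ (∑ m : Fin k → ZMod 2, ∑ G : Ens k n, ε ^ wt (Matrix.vecMul m (inc G.1))) / 2
        - (Fintype.card (Ens k n) : ℝ) := by
    have hb : ∑ G : Ens k n, PfFull G.1 ε
        ≤ ∑ G : Ens k n,
            ((∑ m : Fin k → ZMod 2, ε ^ wt (Matrix.vecMul m (inc G.1))) / 2 - 1) :=
      Finset.sum_le_sum (fun G _ => claimA hk G.1 G.2 h0 h1)
    refine hb.trans (le_of_eq ?_)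
    rw [Finset.sum_sub_distrib, Finset.sum_const, Finset.card_univ, nsmul_eq_mul, mul_one,
      ← Finset.sum_div, Finset.sum_comm]
  -- Step 2: per-vector ensemble average
  have hm_eval : ∀ m : Fin k → ZMod 2,
      ∑ G : Ens k n, ε ^ wt (Matrix.vecMul m (inc G.1))
        = (fun u : ℕ => (n.factorial : ℝ) * ∑ v ∈ Finset.range (n + 1),
            (((u * (k - u)).choose v
              * (k.choose 2 - u * (k - u)).choose (n - v) : ℕ) : ℝ) * ε ^ v) (wt m) := by
    intro m
    have hAsub := Across_subset_PND (k := k) (V1set m)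
    have hac : (Across (V1set m)).card = wt m * (k - wt m) := card_Across (V1set m)
    have hsd : ((PND k) \ Across (V1set m)).card = k.choose 2 - wt m * (k - wt m) := by
      rw [Finset.card_sdiff_of_subset hAsub, PND_card, hac]
    calc ∑ G : Ens k n, ε ^ wt (Matrix.vecMul m (inc G.1))
        = ∑ G : Ens k n,
            (fun S => ε ^ (S ∩ Across (V1set m)).card) (rangeF G) :=
          Finset.sum_congr rfl (fun G _ => by rw [wt_eq_inter])
      _ = ∑ S ∈ (PND k).powersetCard n,
            (n.factorial : ℝ) * ε ^ (S ∩ Across (V1set m)).card :=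
          sum_ens (k := k) (n := n) (fun S => ε ^ (S ∩ Across (V1set m)).card)
      _ = (n.factorial : ℝ) * ∑ S ∈ (PND k).powersetCard n,
            ε ^ (S ∩ Across (V1set m)).card := by rw [Finset.mul_sum]
      _ = _ := by
          rw [sum_inter_card _ _ hAsub n (fun v => ε ^ v), hac, hsd]
  -- Step 3: group by input weight
  have hgroup : ∑ m : Fin k → ZMod 2, ∑ G : Ens k n, ε ^ wt (Matrix.vecMul m (inc G.1))
      = (n.factorial : ℝ) * ∑ u ∈ Finset.range (k + 1), (k.choose u : ℝ) *
          ∑ v ∈ Finset.range (n + 1),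
            (((u * (k - u)).choose v
              * (k.choose 2 - u * (k - u)).choose (n - v) : ℕ) : ℝ) * ε ^ v := by
    have hmapsto : ∀ m : Fin k → ZMod 2, m ∈ (Finset.univ : Finset (Fin k → ZMod 2)) →
        wt m ∈ Finset.range (k + 1) := fun m _ => Finset.mem_range.2 (by
      have := wt_le k m
      omega)
    calc ∑ m : Fin k → ZMod 2, ∑ G : Ens k n, ε ^ wt (Matrix.vecMul m (inc G.1))
        = ∑ m : Fin k → ZMod 2,
            (fun u : ℕ => (n.factorial : ℝ) * ∑ v ∈ Finset.range (n + 1),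
              (((u * (k - u)).choose v
                * (k.choose 2 - u * (k - u)).choose (n - v) : ℕ) : ℝ) * ε ^ v) (wt m) :=
          Finset.sum_congr rfl (fun m _ => hm_eval m)
      _ = ∑ u ∈ Finset.range (k + 1), ∑ m ∈ Finset.univ.filter (fun m => wt m = u),
            (fun u : ℕ => (n.factorial : ℝ) * ∑ v ∈ Finset.range (n + 1),
              (((u * (k - u)).choose v
                * (k.choose 2 - u * (k - u)).choose (n - v) : ℕ) : ℝ) * ε ^ v) u :=
          (Finset.sum_fiberwise_of_maps_to' hmapsto
            (fun u : ℕ => (n.factorial : ℝ) * ∑ v ∈ Finset.range (n + 1),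
              (((u * (k - u)).choose v
                * (k.choose 2 - u * (k - u)).choose (n - v) : ℕ) : ℝ) * ε ^ v)).symm
      _ = _ := by
          rw [Finset.mul_sum]
          refine Finset.sum_congr rfl (fun u hu => ?_)
          rw [Finset.sum_const, card_wt_eq k u, nsmul_eq_mul]
          ring
  -- cardinality of the ensemble
  have hcardEns : (Fintype.card (Ens k n) : ℝ)
      = (n.factorial : ℝ) * ((k.choose 2).choose n : ℝ) := by
    have h1 : (Fintype.card (Ens k n) : ℝ)
        = ∑ G : Ens k n, (fun _ : Finset (Sym2 (Fin k)) => (1:ℝ)) (rangeF G) := by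
      rw [Finset.sum_const, Finset.card_univ, nsmul_eq_mul, mul_one]
    rw [h1, sum_ens (k := k) (n := n) (fun _ => (1:ℝ)), Finset.sum_const,
      Finset.card_powersetCard, PND_card, nsmul_eq_mul, mul_one]
    ring
  have hEpos : (0:ℝ) < (Fintype.card (Ens k n) : ℝ) := by
    rw [hcardEns]; positivity
  rw [Nat.card_eq_fintype_card]
  have hT := hstep1.trans (le_of_eq (by rw [hgroup]))
  have hmain : (∑ G : Ens k n, PfFull G.1 ε) / (Fintype.card (Ens k n) : ℝ)
      ≤ ((n.factorial : ℝ) * (∑ u ∈ Finset.range (k + 1), (k.choose u : ℝ) *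
          ∑ v ∈ Finset.range (n + 1),
            (((u * (k - u)).choose v
              * (k.choose 2 - u * (k - u)).choose (n - v) : ℕ) : ℝ) * ε ^ v) / 2
          - (Fintype.card (Ens k n) : ℝ)) / (Fintype.card (Ens k n) : ℝ) := by
    have h2 := mul_le_mul_of_nonneg_right hT (inv_nonneg.2 hEpos.le)
    simpa [div_eq_mul_inv] using h2
  refine hmain.trans (le_of_eq ?_)
  rw [hcardEns]
  -- final algebra
  have hsplitsum : (∑ u ∈ Finset.range (k + 1), (k.choose u : ℝ) *
        ∑ v ∈ Finset.range (n + 1),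
          (((u * (k - u)).choose v
            * (k.choose 2 - u * (k - u)).choose (n - v) : ℕ) : ℝ) * ε ^ v)
      = (∑ v ∈ Finset.Icc 1 n, ∑ u ∈ Finset.range (k + 1),
            (k.choose u * (u * (k - u)).choose v
              * (k.choose 2 - u * (k - u)).choose (n - v) : ℝ) * ε ^ v)
        + (∑ u ∈ Finset.range (k + 1),
            (k.choose u * (k.choose 2 - u * (k - u)).choose n : ℝ)) := by
    have hins : Finset.range (n + 1) = insert 0 (Finset.Icc 1 n) := by
      ext x
      simp only [Finset.mem_range, Finset.mem_insert, Finset.mem_Icc]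
      omega
    have hterm : ∀ u : ℕ, (k.choose u : ℝ) *
        ∑ v ∈ Finset.range (n + 1),
          (((u * (k - u)).choose v
            * (k.choose 2 - u * (k - u)).choose (n - v) : ℕ) : ℝ) * ε ^ v
        = (k.choose u * (k.choose 2 - u * (k - u)).choose n : ℝ)
          + ∑ v ∈ Finset.Icc 1 n, (k.choose u : ℝ) *
              ((((u * (k - u)).choose v
                * (k.choose 2 - u * (k - u)).choose (n - v) : ℕ) : ℝ) * ε ^ v) := by
      intro u
      rw [hins, Finset.sum_insert (by simp), mul_add, Finset.mul_sum]
      congr 1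
      push_cast [Nat.choose_zero_right, Nat.sub_zero, pow_zero]
      ring
    rw [Finset.sum_congr rfl (fun u _ => hterm u), Finset.sum_add_distrib]
    rw [add_comm]
    congr 1
    rw [Finset.sum_comm]
    refine Finset.sum_congr rfl (fun v _ => Finset.sum_congr rfl (fun u _ => ?_))
    push_cast
    ring
  rw [hsplitsum]
  have hfne : (n.factorial : ℝ) ≠ 0 := ne_of_gt hfac
  have hcne : ((k.choose 2).choose n : ℝ) ≠ 0 := ne_of_gt hch
  field_simp
end
end
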